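/- arXiv:2602.01692 — 7 statements merged into one kernel-verified Lean document; each statement's English description precedes it below -/
import Mathlib

section
/- Let \(\mathcal{F}\) be an \(\ell\)-shifted intersecting family of k-element subsets of [n], and let \(\mathcal{G} = \{A \cap [\ell] : A \in \mathcal{F}\}\). Then \(\mathcal{G}\) is upward closed among subsets of \([\ell]\) of size at most k: if \(A \in \mathcal{G}\), \(A \subseteq B \subseteq [\ell]\), and \(|B| \le k\), then \(B \in \mathcal{G}\). -/
open Finset

/-- The (i,j)-shift of a single set with respect to a family. -/
def shiftSet (F : Finset (Finset ℕ)) (i j : ℕ) (A : Finset ℕ) : Finset ℕ :=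
  if i ∈ A ∧ j ∉ A ∧ (insert j A).erase i ∉ F then (insert j A).erase i else A

/-- The (i,j)-shift of a family. -/
def shiftFam (F : Finset (Finset ℕ)) (i j : ℕ) : Finset (Finset ℕ) :=
  F.image (shiftSet F i j)

/-- A family is intersecting if any two members meet. -/
def IntersectingFam (F : Finset (Finset ℕ)) : Prop :=
  ∀ A ∈ F, ∀ B ∈ F, (A ∩ B).Nonempty

/-- A family is t-intersecting if any two members share at least t elements. -/
def TIntersecting (t : ℕ) (F : Finset (Finset ℕ)) : Prop :=
  ∀ A ∈ F, ∀ B ∈ F, t ≤ (A ∩ B).card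

/-- A family on [n] is ℓ-shifted if it is invariant under all (i,j)-shifts with
    i ∈ [n] \ [ℓ] and j ∈ [ℓ]. -/
def IsShifted (ℓ n : ℕ) (F : Finset (Finset ℕ)) : Prop :=
  ∀ i ∈ Icc 1 n, ∀ j ∈ Icc 1 ℓ, i ∉ Icc 1 ℓ → shiftFam F i j = F

/-- The degree of an element in a family. -/
def deg (F : Finset (Finset ℕ)) (i : ℕ) : ℕ := (F.filter (fun A => i ∈ A)).card

lemma stmt4_aux (n k ℓ : ℕ) (F : Finset (Finset ℕ))
    (hF : ∀ A ∈ F, A ⊆ Icc 1 n) (hunif : ∀ A ∈ F, A.card = k)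
    (hsh : IsShifted ℓ n F) :
    ∀ m : ℕ, ∀ A₀ ∈ F, ∀ B : Finset ℕ, (B \ (A₀ ∩ Icc 1 ℓ)).card = m →
      A₀ ∩ Icc 1 ℓ ⊆ B → B ⊆ Icc 1 ℓ → B.card ≤ k → ∃ C ∈ F, C ∩ Icc 1 ℓ = B := by
  intro m
  induction m with
  | zero =>
    intro A₀ hA₀ B hm hAB _ _
    refine ⟨A₀, hA₀, ?_⟩
    have h : B \ (A₀ ∩ Icc 1 ℓ) = ∅ := card_eq_zero.mp hm
    exact subset_antisymm hAB (sdiff_eq_empty_iff_subset.mp h)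
  | succ m ih =>
    intro A₀ hA₀ B hm hAB hBl hBk
    have hne : (B \ (A₀ ∩ Icc 1 ℓ)).Nonempty := by rw [← card_pos, hm]; omega
    obtain ⟨b, hb⟩ := hne
    rw [mem_sdiff] at hb
    obtain ⟨hbB, hbA⟩ := hb
    have hcard : (A₀ ∩ Icc 1 ℓ).card < A₀.card := by
      have h1 : (A₀ ∩ Icc 1 ℓ).card < B.card :=
        card_lt_card ((ssubset_iff_of_subset hAB).mpr ⟨b, hbB, hbA⟩)
      have := hunif A₀ hA₀
      omega
    have hex : (A₀ \ Icc 1 ℓ).Nonempty := by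
      rw [nonempty_iff_ne_empty]
      intro h
      have hsub : A₀ ⊆ Icc 1 ℓ := sdiff_eq_empty_iff_subset.mp h
      rw [inter_eq_left.mpr hsub] at hcard
      omega
    obtain ⟨i, hi⟩ := hex
    rw [mem_sdiff] at hi
    have hiN : i ∈ Icc 1 n := hF A₀ hA₀ hi.1
    have hbl : b ∈ Icc 1 ℓ := hBl hbB
    have hbA₀ : b ∉ A₀ := fun h => hbA (mem_inter.mpr ⟨h, hbl⟩)
    have hsh' := hsh i hiN b hbl hi.2
    have hmem : shiftSet F i b A₀ ∈ F := by
      have := mem_image_of_mem (shiftSet F i b) hA₀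
      rwa [show Finset.image (shiftSet F i b) F = shiftFam F i b from rfl, hsh'] at this
    have hA₁ : (insert b A₀).erase i ∈ F := by
      by_cases hc : (insert b A₀).erase i ∈ F
      · exact hc
      · unfold shiftSet at hmem
        rw [if_pos ⟨hi.1, hbA₀, hc⟩] at hmem
        exact absurd hmem hc
    have hib : i ≠ b := fun h => hi.2 (h ▸ hbl)
    have hA₁cap : ((insert b A₀).erase i) ∩ Icc 1 ℓ = insert b (A₀ ∩ Icc 1 ℓ) := by
      ext x
      simp only [mem_inter, mem_erase, mem_insert]
      constructor
      · rintro ⟨⟨hxi, hx⟩, hxl⟩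
        rcases hx with rfl | hx
        · exact Or.inl rfl
        · exact Or.inr ⟨hx, hxl⟩
      · rintro (rfl | hx)
        · exact ⟨⟨hib.symm, Or.inl rfl⟩, hbl⟩
        · exact ⟨⟨fun h => hi.2 (h ▸ hx.2), Or.inr hx.1⟩, hx.2⟩
    have hsub : ((insert b A₀).erase i) ∩ Icc 1 ℓ ⊆ B := by
      rw [hA₁cap]
      exact insert_subset hbB hAB
    have hm' : (B \ (((insert b A₀).erase i) ∩ Icc 1 ℓ)).card = m := by
      rw [hA₁cap, sdiff_insert, card_erase_of_mem (mem_sdiff.mpr ⟨hbB, hbA⟩), hm]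
      omega
    exact ih _ hA₁ B hm' hsub hBl hBk

theorem stmt4 (n k ℓ : ℕ) (F : Finset (Finset ℕ))
    (hF : ∀ A ∈ F, A ⊆ Icc 1 n) (hunif : ∀ A ∈ F, A.card = k)
    (hsh : IsShifted ℓ n F) (hint : IntersectingFam F)
    (G : Finset (Finset ℕ)) (hG : G = F.image (fun A => A ∩ Icc 1 ℓ)) :
    ∀ A ∈ G, ∀ B : Finset ℕ, A ⊆ B → B ⊆ Icc 1 ℓ → B.card ≤ k → B ∈ G := by
  subst hG
  intro A hA B hAB hBl hBk
  rw [mem_image] at hA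
  obtain ⟨A₀, hA₀F, rfl⟩ := hA
  obtain ⟨C, hC, hCB⟩ := stmt4_aux n k ℓ F hF hunif hsh _ A₀ hA₀F B rfl hAB hBl hBk
  exact mem_image.mpr ⟨C, hC, hCB⟩
end

section
/- Let \(\ell \ge 2k\) and let \(\mathcal{F}\) be an \(\ell\)-shifted intersecting family of k-element subsets of [n]. Then the trace family \(\mathcal{G} = \{A \cap [\ell] : A \in \mathcal{F}\}\) is intersecting: any two members of \(\mathcal{G}\) have nonempty intersection. -/
open Finset

theorem stmt5 (n k ℓ : ℕ) (hℓ : 2 * k ≤ ℓ) (F : Finset (Finset ℕ))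
    (hF : ∀ A ∈ F, A ⊆ Icc 1 n) (hunif : ∀ A ∈ F, A.card = k)
    (hsh : IsShifted ℓ n F) (hint : IntersectingFam F)
    (G : Finset (Finset ℕ)) (hG : G = F.image (fun A => A ∩ Icc 1 ℓ)) :
    IntersectingFam G := by
  have shift_mem : ∀ A ∈ F, ∀ i ∈ Icc 1 n, ∀ j ∈ Icc 1 ℓ, i ∉ Icc 1 ℓ → i ∈ A → j ∉ A →
      (insert j A).erase i ∈ F := by
    intro A hA i hin j hjl hil hiA hjA
    by_cases h : (insert j A).erase i ∈ F
    · exact h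
    · have heq := hsh i hin j hjl hil
      rw [← heq]
      refine mem_image.mpr ⟨A, hA, ?_⟩
      simp [shiftSet, hiA, hjA, h]
  subst hG
  rintro GA hGA GB hGB
  obtain ⟨A, hA, rfl⟩ := mem_image.mp hGA
  obtain ⟨B, hB, rfl⟩ := mem_image.mp hGB
  have hBcard : B.card = k := hunif B hB
  suffices h : ∀ m (A : Finset ℕ), A ∈ F → (A \ Icc 1 ℓ).card = m →
      (A ∩ B ∩ Icc 1 ℓ).Nonempty by
    obtain ⟨x, hx⟩ := h _ A hA rfl
    simp only [mem_inter] at hx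
    exact ⟨x, by simp only [mem_inter]; tauto⟩
  intro m
  induction m with
  | zero =>
    intro A hA hcard
    have hsub : A ⊆ Icc 1 ℓ := by
      intro x hx
      by_contra hx'
      have hne : A \ Icc 1 ℓ ≠ ∅ := by
        intro h0
        have : x ∈ A \ Icc 1 ℓ := mem_sdiff.mpr ⟨hx, hx'⟩
        simp [h0] at this
      exact hne (card_eq_zero.mp hcard)
    obtain ⟨x, hx⟩ := hint A hA B hB
    simp only [mem_inter] at hx
    exact ⟨x, by simp only [mem_inter]; exact ⟨⟨hx.1, hx.2⟩, hsub hx.1⟩⟩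
  | succ m ih =>
    intro A hA hcard
    have hAcard : A.card = k := hunif A hA
    have hne : (A \ Icc 1 ℓ).Nonempty := by rw [← card_pos, hcard]; omega
    obtain ⟨i, hi⟩ := hne
    have hiA : i ∈ A := (mem_sdiff.mp hi).1
    have hil : i ∉ Icc 1 ℓ := (mem_sdiff.mp hi).2
    have hin : i ∈ Icc 1 n := hF A hA hiA
    -- find j ∈ Icc 1 ℓ \ (A ∪ B)
    have h1 : (A ∩ Icc 1 ℓ).card + (A \ Icc 1 ℓ).card = A.card :=
      card_inter_add_card_sdiff A (Icc 1 ℓ)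
    have h2 : (B ∩ Icc 1 ℓ).card ≤ k := hBcard ▸ card_le_card inter_subset_left
    have h3 : ((A ∪ B) ∩ Icc 1 ℓ).card ≤ (A ∩ Icc 1 ℓ).card + (B ∩ Icc 1 ℓ).card := by
      rw [union_inter_distrib_right]
      exact card_union_le _ _
    have h4 : (Icc 1 ℓ \ (A ∪ B)).card + ((A ∪ B) ∩ Icc 1 ℓ).card = ℓ := by
      have : Icc 1 ℓ \ (A ∪ B) = Icc 1 ℓ \ ((A ∪ B) ∩ Icc 1 ℓ) := by
        ext x; simp only [mem_sdiff, mem_inter]; tauto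
      rw [this, card_sdiff_add_card_eq_card inter_subset_right, Nat.card_Icc]; omega
    have hjne : (Icc 1 ℓ \ (A ∪ B)).Nonempty := by rw [← card_pos]; omega
    obtain ⟨j, hj⟩ := hjne
    have hjl : j ∈ Icc 1 ℓ := (mem_sdiff.mp hj).1
    have hjAB : j ∉ A ∪ B := (mem_sdiff.mp hj).2
    have hjA : j ∉ A := fun h => hjAB (mem_union_left _ h)
    have hjB : j ∉ B := fun h => hjAB (mem_union_right _ h)
    set A' := (insert j A).erase i with hA'def
    have hA'F : A' ∈ F := shift_mem A hA i hin j hjl hil hiA hjA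
    have hA'card : (A' \ Icc 1 ℓ).card = m := by
      have : A' \ Icc 1 ℓ = (A \ Icc 1 ℓ).erase i := by
        ext x
        simp only [hA'def, mem_sdiff, mem_erase, mem_insert]
        constructor
        · rintro ⟨⟨hxi, hx⟩, hxl⟩
          rcases hx with rfl | hx
          · exact absurd hjl hxl
          · exact ⟨hxi, hx, hxl⟩
        · rintro ⟨hxi, hx, hxl⟩
          exact ⟨⟨hxi, Or.inr hx⟩, hxl⟩
      rw [this, card_erase_of_mem hi, hcard]; omega
    obtain ⟨x, hx⟩ := ih A' hA'F hA'card
    simp only [mem_inter, hA'def, mem_erase, mem_insert] at hx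
    obtain ⟨⟨⟨hxi, hx1⟩, hxB⟩, hxl⟩ := hx
    rcases hx1 with rfl | hxA
    · exact absurd hxB hjB
    · exact ⟨x, by simp only [mem_inter]; exact ⟨⟨hxA, hxB⟩, hxl⟩⟩
end

section
/- Let \(\mathcal{F}\) be an \(\ell\)-shifted intersecting family of k-element subsets of [n]. If \(A, B \in \mathcal{F}\) satisfy \(A \cap B \cap [\ell] = \emptyset\), then \(|A \cap [\ell]| + |B \cap [\ell]| + |A \cap B| \ge \ell + 1\). -/
open Finset

lemma shift_mem {F : Finset (Finset ℕ)} {i j : ℕ} (h : shiftFam F i j = F)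
    {A : Finset ℕ} (hA : A ∈ F) (hi : i ∈ A) (hj : j ∉ A) :
    (insert j A).erase i ∈ F := by
  by_contra hC
  have h1 : shiftSet F i j A = (insert j A).erase i := by
    unfold shiftSet; rw [if_pos ⟨hi, hj, hC⟩]
  have h2 : (insert j A).erase i ∈ shiftFam F i j := by
    rw [← h1]; exact mem_image_of_mem _ hA
  rw [h] at h2; exact hC h2

lemma aux_shift (n ℓ : ℕ) (F : Finset (Finset ℕ))
    (hsh : IsShifted ℓ n F) (hint : IntersectingFam F)
    (B : Finset ℕ) (hB : B ∈ F) :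
    ∀ m : ℕ, ∀ A : Finset ℕ, A ∈ F → A ∩ B ⊆ Icc 1 n → A ∩ B ∩ Icc 1 ℓ = ∅ →
      (A ∩ B).card = m → m ≤ ((Icc 1 ℓ) \ (A ∪ B)).card → False := by
  intro m
  induction m with
  | zero =>
    intro A hAF _ _ hcard _
    have : A ∩ B = ∅ := card_eq_zero.mp hcard
    obtain ⟨x, hx⟩ := hint A hAF B hB
    simp [this] at hx
  | succ m ih =>
    intro A hAF hsub hdisj hcard hle
    have hne : (A ∩ B).Nonempty := card_pos.mp (by omega)
    obtain ⟨i, hi⟩ := hne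
    have hsdne : ((Icc 1 ℓ) \ (A ∪ B)).Nonempty := card_pos.mp (by omega)
    obtain ⟨j, hj⟩ := hsdne
    have hjℓ : j ∈ Icc 1 ℓ := (mem_sdiff.mp hj).1
    have hjAB : j ∉ A ∪ B := (mem_sdiff.mp hj).2
    have hjA : j ∉ A := fun h => hjAB (mem_union_left _ h)
    have hjB : j ∉ B := fun h => hjAB (mem_union_right _ h)
    have hiA : i ∈ A := (mem_inter.mp hi).1
    have hiB : i ∈ B := (mem_inter.mp hi).2
    have hin : i ∈ Icc 1 n := hsub hi
    have hiℓ : i ∉ Icc 1 ℓ := by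
      intro h
      have : i ∈ A ∩ B ∩ Icc 1 ℓ := mem_inter.mpr ⟨hi, h⟩
      rw [hdisj] at this; exact notMem_empty _ this
    have hA' : (insert j A).erase i ∈ F :=
      shift_mem (hsh i hin j hjℓ hiℓ) hAF hiA hjA
    set A' := (insert j A).erase i with hA'def
    have hinter : A' ∩ B = (A ∩ B).erase i := by
      ext x
      simp only [hA'def, mem_inter, mem_erase, mem_insert]
      constructor
      · rintro ⟨⟨hxi, hx⟩, hxB⟩
        rcases hx with rfl | hxA
        · exact absurd hxB hjB
        · exact ⟨hxi, hxA, hxB⟩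
      · rintro ⟨hxi, hxA, hxB⟩
        exact ⟨⟨hxi, Or.inr hxA⟩, hxB⟩
    have hsd : (Icc 1 ℓ) \ (A' ∪ B) = ((Icc 1 ℓ) \ (A ∪ B)).erase j := by
      ext x
      by_cases hxℓ : x ∈ Icc 1 ℓ
      · have hxi : x ≠ i := fun h => hiℓ (h ▸ hxℓ)
        simp only [hA'def, mem_sdiff, mem_erase, mem_union, mem_insert, hxℓ, true_and]
        tauto
      · simp [mem_sdiff, mem_erase, hxℓ]
    refine ih A' hA' ?_ ?_ ?_ ?_
    · rw [hinter]; exact (erase_subset _ _).trans hsub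
    · rw [hinter]
      apply subset_empty.mp
      rw [← hdisj]
      exact inter_subset_inter (erase_subset _ _) Subset.rfl
    · rw [hinter, card_erase_of_mem hi, hcard]; omega
    · rw [hsd, card_erase_of_mem hj]; omega

theorem stmt6 (n k ℓ : ℕ) (F : Finset (Finset ℕ))
    (hF : ∀ A ∈ F, A ⊆ Icc 1 n) (hunif : ∀ A ∈ F, A.card = k)
    (hsh : IsShifted ℓ n F) (hint : IntersectingFam F)
    (A B : Finset ℕ) (hA : A ∈ F) (hB : B ∈ F)
    (hdisj : A ∩ B ∩ Icc 1 ℓ = ∅) :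
    ℓ + 1 ≤ (A ∩ Icc 1 ℓ).card + (B ∩ Icc 1 ℓ).card + (A ∩ B).card := by
  by_contra hcon
  push_neg at hcon
  have hsum : (A ∩ Icc 1 ℓ).card + (B ∩ Icc 1 ℓ).card + (A ∩ B).card ≤ ℓ := by omega
  -- compute card of Icc 1 ℓ \ (A ∪ B)
  have hunion : (A ∪ B) ∩ Icc 1 ℓ = (A ∩ Icc 1 ℓ) ∪ (B ∩ Icc 1 ℓ) := by
    rw [union_inter_distrib_right]
  have hdisj2 : Disjoint (A ∩ Icc 1 ℓ) (B ∩ Icc 1 ℓ) := by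
    rw [disjoint_left]
    intro x hx1 hx2
    have : x ∈ A ∩ B ∩ Icc 1 ℓ := by
      simp only [mem_inter] at *
      exact ⟨⟨hx1.1, hx2.1⟩, hx1.2⟩
    rw [hdisj] at this
    exact notMem_empty _ this
  have hcardU : ((A ∪ B) ∩ Icc 1 ℓ).card = (A ∩ Icc 1 ℓ).card + (B ∩ Icc 1 ℓ).card := by
    rw [hunion, card_union_of_disjoint hdisj2]
  have hsd : ((Icc 1 ℓ) \ (A ∪ B)).card = ℓ - ((A ∪ B) ∩ Icc 1 ℓ).card := by
    have h2 : ((Icc 1 ℓ) \ (A ∪ B)).card + ((Icc 1 ℓ) ∩ (A ∪ B)).card = ℓ := by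
      rw [card_sdiff_add_card_inter]; simp
    rw [inter_comm] at h2
    omega
  have hle : (A ∩ B).card ≤ ((Icc 1 ℓ) \ (A ∪ B)).card := by
    rw [hsd, hcardU]; omega
  exact aux_shift n ℓ F hsh hint B hB (A ∩ B).card A hA
    (fun x hx => hF A hA (mem_inter.mp hx).1) hdisj rfl hle
end

section
/- Let \(n > 2k\) and let \(\mathcal{G}\) be a (not necessarily uniform) intersecting family of subsets of [n], assuming the Huang–Zhao minimum-degree theorem (every k-uniform intersecting family on [n] with n > 2k has some element of degree at most \(\binom{n-2}{k-2}\)). Then there exists an element \(i \in [n]\) such that for every \(m \le k\), the number of m-element sets of \(\mathcal{G}\) containing i is at most \(\binom{n-2}{m-2}\). -/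
open Finset

open scoped FinsetFamily
attribute [-instance] instDecidableEqFin

lemma card_finlt {N s : ℕ} (h : s ≤ N) :
    #(univ.filter (fun x : Fin N => x.val < s)) = s := by
  rw [← Finset.card_range s]
  exact card_nbij (fun x => x.val) (by intro x hx; simp only [coe_filter, mem_univ, true_and, Set.mem_setOf_eq, coe_range, Set.mem_Iio, Finset.card_range] at hx ⊢; omega) (fun a _ b _ hab => Fin.val_injective hab)
    (by rintro y hy; simp only [Finset.mem_coe, Finset.mem_range] at hy
        exact ⟨⟨y, lt_of_lt_of_le hy h⟩, by simp [hy], rfl⟩)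

lemma card_finIoo {N a b : ℕ} (h : b ≤ N) :
    #(univ.filter (fun x : Fin N => a < x.val ∧ x.val < b)) = b - (a + 1) := by
  rw [← Nat.card_Ico (a+1) b]
  exact card_nbij (fun x => x.val)
    (by intro x hx; simp only [coe_filter, mem_univ, true_and, Set.mem_setOf_eq, coe_Ico, Set.mem_Ico] at hx ⊢; omega)
    (fun a _ b _ hab => Fin.val_injective hab)
    (by rintro y hy; simp only [Finset.mem_coe, Finset.mem_Ico] at hy
        exact ⟨⟨y, by omega⟩, by simp; omega, rfl⟩)

lemma strictKK {N s r j : ℕ} (hrs : r ≤ s) (hsN : s < N) (hj : j + 1 ≤ r)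
    (𝒜 : Finset (Finset (Fin N))) (h𝒜 : (𝒜 : Set (Finset (Fin N))).Sized r)
    (hcard : s.choose r + 1 ≤ #𝒜) :
    s.choose (r - j) + 1 ≤ #(∂^[j] 𝒜) := by
  have hr : 1 ≤ r := by omega
  set S : Finset (Fin N) := univ.filter (fun x : Fin N => x.val < s) with hSdef
  have hS : #S = s := card_finlt hsN.le
  set sh : Fin N := ⟨s, hsN⟩ with hshdef
  set R : Finset (Fin N) := univ.filter (fun x : Fin N => x.val < r - 1) with hRdef
  have hR : #R = r - 1 := card_finlt (by omega)
  have hshR : sh ∉ R := by simp [hRdef, hshdef]; omega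
  set X : Finset (Fin N) := insert sh R with hXdef
  have hX : #X = r := by rw [card_insert_of_notMem hshR, hR]; omega
  -- members of X are ≤ sh
  have hXle : ∀ x ∈ X, x ≤ sh := by
    intro x hx
    rcases Finset.mem_insert.1 hx with rfl | hx
    · exact le_refl _
    · simp only [hRdef, mem_filter] at hx
      exact le_of_lt (by exact Fin.lt_def.2 (by simp [hshdef]; omega))
  -- Step 1 : initSeg X ⊆ insert X (powersetCard r S)
  have hsub : Colex.initSeg X ⊆ insert X (powersetCard r S) := by
    intro t ht
    rw [Colex.mem_initSeg] at ht
    obtain ⟨hcardt, hle⟩ := ht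
    rw [mem_insert]
    by_cases htX : t = X
    · exact Or.inl htX
    right
    rw [mem_powersetCard]
    refine ⟨?_, by omega⟩
    have hne : (symmDiff t X).Nonempty := Finset.symmDiff_nonempty.2 htX
    set m : Fin N := (symmDiff t X).max' hne with hmdef
    have hm : m ∈ X := Colex.toColex_le_toColex_iff_max'_mem.mp hle htX
    have hmmem : m ∈ symmDiff t X := Finset.max'_mem _ hne
    have hmt : m ∉ t := by
      rw [Finset.mem_symmDiff] at hmmem
      rcases hmmem with ⟨h1, h2⟩ | ⟨h1, h2⟩
      · exact absurd hm h2
      · exact h2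
    -- Step A : every element of t is ≤ sh
    have hA : ∀ a ∈ t, a ≤ sh := by
      intro a hat
      by_contra hlt
      push_neg at hlt
      have haX : a ∉ X := fun h => absurd (hXle a h) (not_le.2 hlt)
      have haΔ : a ∈ symmDiff t X := Finset.mem_symmDiff.2 (Or.inl ⟨hat, haX⟩)
      have : a ≤ m := Finset.le_max' _ _ haΔ
      exact absurd (lt_of_lt_of_le hlt (this.trans (hXle m hm))) (lt_irrefl _)
    -- Step B : sh ∉ t
    have hB : sh ∉ t := by
      intro hsht
      have hmsh : m ≠ sh := by
        intro hmeq
        rw [Finset.mem_symmDiff, hmeq] at hmmem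
        have : sh ∈ X := mem_insert_self _ _
        tauto
      have hmR : m ∈ R := (Finset.mem_insert.1 hm).resolve_left hmsh
      have hmval : m.val < r - 1 := by simpa [hRdef] using hmR
      -- elements above m agree in t and X
      have hagree : t.filter (fun x => m < x) = X.filter (fun x => m < x) := by
        ext x
        simp only [mem_filter]
        constructor
        · rintro ⟨hxt, hmx⟩
          refine ⟨?_, hmx⟩
          by_contra hxX
          have : x ≤ m := Finset.le_max' _ _ (Finset.mem_symmDiff.2 (Or.inl ⟨hxt, hxX⟩))
          exact absurd (lt_of_lt_of_le hmx this) (lt_irrefl _)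
        · rintro ⟨hxX, hmx⟩
          refine ⟨?_, hmx⟩
          by_contra hxt
          have : x ≤ m := Finset.le_max' _ _ (Finset.mem_symmDiff.2 (Or.inr ⟨hxX, hxt⟩))
          exact absurd (lt_of_lt_of_le hmx this) (lt_irrefl _)
      have hmsh' : m < sh := by
        rw [Fin.lt_def]; simp [hshdef]; omega
      have hXfilt : X.filter (fun x => m < x) = insert sh (R.filter (fun x => m < x)) := by
        rw [hXdef, filter_insert, if_pos hmsh']
      have hRfilt : R.filter (fun x => m < x)
          = univ.filter (fun x : Fin N => m.val < x.val ∧ x.val < r - 1) := by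
        rw [hRdef]
        ext x
        simp only [mem_filter, mem_univ, true_and, Fin.lt_def]
        tauto
      have hcard1 : #(X.filter (fun x => m < x)) = (r - 1) - (m.val + 1) + 1 := by
        rw [hXfilt, card_insert_of_notMem (fun h => hshR (Finset.mem_of_mem_filter _ h)),
          hRfilt, card_finIoo (by omega)]
      have hcard2 : #(t.filter (fun x => ¬ m < x)) ≤ m.val := by
        calc #(t.filter (fun x => ¬ m < x)) ≤ #(univ.filter (fun x : Fin N => x.val < m.val)) := by
              apply card_le_card
              intro x hx
              simp only [mem_filter, not_lt] at hx ⊢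
              refine ⟨mem_univ _, ?_⟩
              have hxm : x ≠ m := fun h => hmt (h ▸ hx.1)
              have := lt_of_le_of_ne hx.2 hxm
              exact Fin.lt_def.1 this
          _ = m.val := card_finlt (le_of_lt m.isLt)
      have hsplit := Finset.card_filter_add_card_filter_not
        (s := t) (p := fun x => m < x)
      rw [hagree, hcard1] at hsplit
      have htcard : #t = r := by omega
      omega
    -- conclude t ⊆ S
    intro a hat
    have h1 := hA a hat
    have h2 : a ≠ sh := fun h => hB (h ▸ hat)
    simp only [hSdef, mem_filter, mem_univ, true_and]
    have := lt_of_le_of_ne h1 h2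
    have := Fin.lt_def.1 this
    simpa [hshdef] using this
  -- Step 2 : apply iterated KK with the initial segment
  have hinit : Colex.IsInitSeg (Colex.initSeg X) r := by
    have := Colex.isInitSeg_initSeg (s := X)
    rwa [hX] at this
  have hsize : #(Colex.initSeg X) ≤ #𝒜 := by
    calc #(Colex.initSeg X) ≤ #(insert X (powersetCard r S)) := card_le_card hsub
      _ ≤ #(powersetCard r S) + 1 := card_insert_le _ _
      _ = s.choose r + 1 := by rw [card_powersetCard, hS]
      _ ≤ #𝒜 := hcard
  have hkk := Finset.iterated_kk (k := j) h𝒜 hsize hinit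
  -- Step 3 : lower bound the iterated shadow of the initial segment
  set R' : Finset (Fin N) := univ.filter (fun x : Fin N => x.val < r - j - 1) with hR'def
  set X' : Finset (Fin N) := insert sh R' with hX'def
  have hshR' : sh ∉ R' := by simp [hR'def, hshdef]; omega
  have hX' : #X' = r - j := by
    rw [card_insert_of_notMem hshR', card_finlt (by omega)]; omega
  have hR'R : R' ⊆ R := by
    intro x hx
    simp only [hR'def, hRdef, mem_filter] at hx ⊢
    exact ⟨hx.1, by omega⟩
  have hX'X : X' ⊆ X := insert_subset_insert _ hR'R
  have hX'mem : X' ∈ ∂^[j] (Colex.initSeg X) := by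
    rw [mem_shadow_iterate_iff_exists_sdiff]
    exact ⟨X, Colex.mem_initSeg_self, hX'X, by rw [card_sdiff_of_subset hX'X, hX, hX']; omega⟩
  have hpows : powersetCard (r - j) S ⊆ ∂^[j] (Colex.initSeg X) := by
    intro B hB
    rw [mem_powersetCard] at hB
    obtain ⟨hBS, hBcard⟩ := hB
    obtain ⟨A, hBA, hAS, hAcard⟩ := exists_subsuperset_card_eq (n := r) hBS
      (by omega) (by rw [hS]; omega)
    rw [mem_shadow_iterate_iff_exists_sdiff]
    refine ⟨A, ?_, hBA, by rw [card_sdiff_of_subset hBA, hAcard, hBcard]; omega⟩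
    rw [Colex.mem_initSeg]
    refine ⟨by rw [hX, hAcard], ?_⟩
    rw [Colex.toColex_le_toColex]
    intro a haA haX
    refine ⟨sh, Finset.mem_insert_self _ _, ?_, ?_⟩
    · intro hshA
      have := hAS hshA
      simp [hSdef, hshdef] at this
    · have := hAS haA
      simp only [hSdef, mem_filter] at this
      exact le_of_lt (Fin.lt_def.2 (by simp [hshdef]; omega))
  have hX'npow : X' ∉ powersetCard (r - j) S := by
    rw [mem_powersetCard]
    rintro ⟨hsub', -⟩
    have := hsub' (Finset.mem_insert_self sh R')
    simp [hSdef, hshdef] at this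
  have hfinal : insert X' (powersetCard (r - j) S) ⊆ ∂^[j] (Colex.initSeg X) := by
    rw [insert_subset_iff]
    exact ⟨hX'mem, hpows⟩
  calc s.choose (r - j) + 1 = #(powersetCard (r - j) S) + 1 := by rw [card_powersetCard, hS]
    _ = #(insert X' (powersetCard (r - j) S)) := (card_insert_of_notMem hX'npow).symm
    _ ≤ #(∂^[j] (Colex.initSeg X)) := card_le_card hfinal
    _ ≤ #(∂^[j] 𝒜) := hkk

theorem stmt7 (n k : ℕ) (hnk : 2 * k < n)
    (G : Finset (Finset ℕ)) (hG : ∀ A ∈ G, A ⊆ Icc 1 n)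
    (hint : IntersectingFam G)
    (HZ : ∀ F : Finset (Finset ℕ), (∀ A ∈ F, A ⊆ Icc 1 n) →
      (∀ A ∈ F, A.card = k) → IntersectingFam F →
      ∃ i ∈ Icc 1 n, deg F i ≤ Nat.choose (n - 2) (k - 2)) :
    ∃ i ∈ Icc 1 n, ∀ m ≤ k,
      (G.filter (fun A => i ∈ A ∧ A.card = m)).card ≤ Nat.choose (n - 2) (m - 2) := by
  classical
  set H : Finset (Finset ℕ) := (powersetCard k (Icc 1 n)).filter (fun B => ∃ A ∈ G, A ⊆ B)
    with hHdef
  have hH1 : ∀ B ∈ H, B ⊆ Icc 1 n := fun B hB => (mem_powersetCard.1 (mem_filter.1 hB).1).1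
  have hH2 : ∀ B ∈ H, B.card = k := fun B hB => (mem_powersetCard.1 (mem_filter.1 hB).1).2
  have hH3 : IntersectingFam H := by
    intro B1 hB1 B2 hB2
    obtain ⟨A1, hA1G, hA1B⟩ := (mem_filter.1 hB1).2
    obtain ⟨A2, hA2G, hA2B⟩ := (mem_filter.1 hB2).2
    exact Finset.Nonempty.mono (inter_subset_inter hA1B hA2B) (hint A1 hA1G A2 hA2G)
  obtain ⟨i, hi_mem, hi⟩ := HZ H hH1 hH2 hH3
  refine ⟨i, hi_mem, ?_⟩
  intro m hm
  by_cases hm1 : m ≤ 1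
  · have hsub : (G.filter (fun A => i ∈ A ∧ A.card = m)) ⊆ {({i} : Finset ℕ)} := by
      intro A hA
      rw [mem_filter] at hA
      obtain ⟨-, hiA, hcA⟩ := hA
      rw [mem_singleton]
      apply Finset.eq_singleton_iff_unique_mem.2
      refine ⟨hiA, fun b hb => ?_⟩
      exact Finset.card_le_one.1 (by omega) b hb i hiA
    have hc1 : #(G.filter (fun A => i ∈ A ∧ A.card = m)) ≤ 1 :=
      le_trans (card_le_card hsub) (le_of_eq (card_singleton _))
    have h0 : m - 2 = 0 := by omega
    rw [h0, Nat.choose_zero_right]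
    exact hc1
  · push_neg at hm1
    by_contra hcon
    push_neg at hcon
    set P := G.filter (fun A => i ∈ A ∧ A.card = m) with hPdef
    have hk2 : 2 ≤ k := le_trans hm1 hm
    have hPcard : Nat.choose (n-2) (m-2) + 1 ≤ #P := hcon
    set U : Finset ℕ := (Icc 1 n).erase i with hUdef
    have hU : #U = n - 1 := by
      rw [card_erase_of_mem hi_mem, Nat.card_Icc]
      omega
    set e := U.orderIsoOfFin hU with hedef
    set f : Finset ℕ → Finset (Fin (n-1)) := fun A => univ.filter (fun x => (e x : ℕ) ∈ A)
      with hfdef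
    have hfmem : ∀ (A : Finset ℕ) (x : Fin (n-1)), x ∈ f A ↔ (e x : ℕ) ∈ A := by
      intro A x; simp [hfdef]
    have hecoe_inj : Function.Injective (fun x : Fin (n-1) => (e x : ℕ)) :=
      fun a b hab => e.injective (Subtype.coe_injective hab)
    have hfcard : ∀ X : Finset ℕ, X ⊆ U → #(f X) = #X := by
      intro X hXU
      apply card_nbij (fun x => (e x : ℕ))
      · intro x hx; exact (hfmem X x).1 hx
      · intro a _ b _ hab; exact hecoe_inj hab
      · intro u hu
        simp only [Finset.mem_coe] at hu ⊢
        refine ⟨e.symm ⟨u, hXU hu⟩, ?_, by simp⟩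
        rw [Finset.mem_coe, hfmem]
        simpa using hu
    have hfinj : ∀ X Y : Finset ℕ, X ⊆ U → Y ⊆ U → f X = f Y → X = Y := by
      have key : ∀ X Y : Finset ℕ, X ⊆ U → f X = f Y → ∀ u ∈ X, u ∈ Y := by
        intro X Y hXU hfXY u hu
        have hx : e.symm ⟨u, hXU hu⟩ ∈ f X := by
          rw [hfmem]; simpa using hu
        rw [hfXY, hfmem] at hx
        simpa using hx
      intro X Y hXU hYU hfXY
      exact Finset.Subset.antisymm (key X Y hXU hfXY) (key Y X hYU hfXY.symm)
    set 𝒜 : Finset (Finset (Fin (n-1))) := P.image (fun A => (f (A.erase i))ᶜ) with h𝒜def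
    have hPsub : ∀ A ∈ P, A.erase i ⊆ U :=
      fun A hA => Finset.erase_subset_erase i (hG A (mem_filter.1 hA).1)
    have h𝒜card : #𝒜 = #P := by
      apply card_image_of_injOn
      intro A hA A' hA' heq
      have h1 : f (A.erase i) = f (A'.erase i) := by
        have := congrArg compl heq; simpa using this
      have h2 := hfinj _ _ (hPsub A hA) (hPsub A' hA') h1
      have hiA : i ∈ A := ((mem_filter.1 hA).2).1
      have hiA' : i ∈ A' := ((mem_filter.1 hA').2).1
      rw [← insert_erase hiA, ← insert_erase hiA', h2]
    have h𝒜sized : (𝒜 : Set (Finset (Fin (n-1)))).Sized (n - m) := by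
      intro E hE
      simp only [h𝒜def, coe_image, Set.mem_image, Finset.mem_coe] at hE
      obtain ⟨A, hA, rfl⟩ := hE
      have hAm : A.card = m := ((mem_filter.1 hA).2).2
      have hiA : i ∈ A := ((mem_filter.1 hA).2).1
      rw [card_compl, Fintype.card_fin, hfcard _ (hPsub A hA), card_erase_of_mem hiA, hAm]
      omega
    have hKK := strictKK (N := n-1) (s := n-2) (r := n-m) (j := k-m)
      (by omega) (by omega) (by omega) 𝒜 h𝒜sized
      (by
        have hsymm : (n-2).choose (n-m) = (n-2).choose (m-2) := by
          have hx : n - m = (n-2) - (m-2) := by omega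
          rw [hx, Nat.choose_symm (by omega)]
        rw [hsymm, h𝒜card]; exact hPcard)
    have hidx : (n - m) - (k - m) = n - k := by omega
    have hsymm2 : (n-2).choose (n-k) = (n-2).choose (k-2) := by
      have hx : n - k = (n-2) - (k-2) := by omega
      rw [hx, Nat.choose_symm (by omega)]
    rw [hidx, hsymm2] at hKK
    have himg : ∀ (D : Finset (Fin (n-1))), i ∉ (Dᶜ).image (fun x => (e x : ℕ)) := by
      intro D h
      obtain ⟨x, -, hx⟩ := mem_image.1 h
      have h2 := (e x).2
      rw [hx, hUdef] at h2
      exact notMem_erase i (Icc 1 n) h2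
    have hinj : #(∂^[k-m] 𝒜) ≤ deg H i := by
      show _ ≤ #(H.filter (fun A => i ∈ A))
      apply card_le_card_of_injOn (fun D => insert i ((Dᶜ).image (fun x => (e x : ℕ))))
      · intro D hD
        rw [Finset.mem_coe, mem_shadow_iterate_iff_exists_sdiff] at hD
        obtain ⟨E, hE𝒜, hDE, hED⟩ := hD
        obtain ⟨A, hAP, rfl⟩ := mem_image.1 hE𝒜
        have hAG : A ∈ G := (mem_filter.1 hAP).1
        have hiA : i ∈ A := ((mem_filter.1 hAP).2).1
        have hAm : #A = m := ((mem_filter.1 hAP).2).2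
        have hEcard : #((f (A.erase i))ᶜ) = n - m := h𝒜sized (Finset.mem_coe.2 hE𝒜)
        have hDle : #D ≤ #((f (A.erase i))ᶜ) := card_le_card hDE
        have hsd := card_sdiff_of_subset hDE
        have hDcard : #D = n - k := by omega
        have hB0card : #((Dᶜ).image (fun x => (e x : ℕ))) = k - 1 := by
          rw [card_image_of_injective _ hecoe_inj, card_compl, Fintype.card_fin, hDcard]
          omega
        have hB0U : ∀ u ∈ (Dᶜ).image (fun x => (e x : ℕ)), u ∈ U := by
          intro u hu
          obtain ⟨x, -, rfl⟩ := mem_image.1 hu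
          exact (e x).2
        rw [Finset.mem_coe, mem_filter]
        refine ⟨?_, mem_insert_self _ _⟩
        rw [hHdef, mem_filter, mem_powersetCard]
        refine ⟨⟨?_, ?_⟩, A, hAG, ?_⟩
        · rw [insert_subset_iff]
          exact ⟨hi_mem, fun u hu => Finset.mem_of_mem_erase (hB0U u hu)⟩
        · rw [card_insert_of_notMem (himg D), hB0card]; omega
        · intro a ha
          by_cases hai : a = i
          · rw [hai]; exact mem_insert_self _ _
          · apply mem_insert_of_mem
            have haE : a ∈ A.erase i := mem_erase.2 ⟨hai, ha⟩
            have haU : a ∈ U := hPsub A hAP haE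
            have hxf : e.symm ⟨a, haU⟩ ∈ f (A.erase i) := by
              rw [hfmem]; simpa using haE
            have hsub2 : f (A.erase i) ⊆ Dᶜ := by
              intro y hy
              rw [Finset.mem_compl]
              intro hyD
              have hyE := hDE hyD
              rw [Finset.mem_compl] at hyE
              exact hyE hy
            exact mem_image.2 ⟨e.symm ⟨a, haU⟩, hsub2 hxf, by simp⟩
      · intro D hD D' hD' heq
        simp only at heq
        have h1 : (Dᶜ).image (fun x => (e x : ℕ)) = (D'ᶜ).image (fun x => (e x : ℕ)) := by
          have h2 := congrArg (fun S : Finset ℕ => S.erase i) heq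
          simpa [Finset.erase_insert (himg D), Finset.erase_insert (himg D')] using h2
        have h3 : Dᶜ = D'ᶜ := Finset.image_injective hecoe_inj h1
        have h4 := congrArg compl h3
        simpa using h4
    omega
end

section
/- Assuming the Huang–Zhao theorem (for n > 2k, every intersecting family \(\mathcal{F} \subseteq \binom{[n]}{k}\) has minimum degree at most \(\binom{n-2}{k-2}\)): for all \(n \ge 2k+1\) and every intersecting family \(\mathcal{F} \subseteq \binom{[n]}{k}\), there exist at least \(n - 2k\) elements \(i \in [n]\) with degree \(d_i(\mathcal{F}) \le \binom{n-2}{k-2}\); equivalently, the (2k+1)-th largest degree satisfies \(d_{2k+1}(\mathcal{F}) \le \binom{n-2}{k-2}\). -/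
open Finset

namespace Stmt8work

open Finset Finset.Colex
open scoped FinsetFamily
open scoped symmDiff

variable {F : Finset (Finset ℕ)} {i j : ℕ}

lemma shiftSet_cases (F : Finset (Finset ℕ)) (i j : ℕ) (A : Finset ℕ) :
    (¬ (i ∈ A ∧ j ∉ A ∧ (insert j A).erase i ∉ F) ∧ shiftSet F i j A = A) ∨
    ((i ∈ A ∧ j ∉ A ∧ (insert j A).erase i ∉ F) ∧
      shiftSet F i j A = (insert j A).erase i) := by
  unfold shiftSet
  by_cases h : i ∈ A ∧ j ∉ A ∧ (insert j A).erase i ∉ F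
  · right; exact ⟨h, if_pos h⟩
  · left; exact ⟨h, if_neg h⟩

lemma card_shiftSet (F : Finset (Finset ℕ)) (i j : ℕ) (A : Finset ℕ) :
    (shiftSet F i j A).card = A.card := by
  rcases shiftSet_cases F i j A with ⟨_, h⟩ | ⟨⟨hi, hj, _⟩, h⟩
  · rw [h]
  · rw [h, card_erase_of_mem (mem_insert_of_mem hi), card_insert_of_notMem hj]
    simp

lemma shiftSet_subset {n : ℕ} (hA : A ⊆ Icc 1 n) (hj : j ∈ Icc 1 n) :
    shiftSet F i j A ⊆ Icc 1 n := by
  rcases shiftSet_cases F i j A with ⟨_, h⟩ | ⟨_, h⟩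
  · rw [h]; exact hA
  · rw [h]
    intro x hx
    rcases mem_insert.1 (mem_of_mem_erase hx) with rfl | hx'
    · exact hj
    · exact hA hx'

lemma mem_shifted_of_ne {A : Finset ℕ} {m : ℕ} (hm : m ≠ i) (h : m ∈ A) :
    m ∈ shiftSet F i j A := by
  rcases shiftSet_cases F i j A with ⟨_, hh⟩ | ⟨_, hh⟩
  · rw [hh]; exact h
  · rw [hh]; exact mem_erase.2 ⟨hm, mem_insert_of_mem h⟩

lemma shiftSet_injOn (F : Finset (Finset ℕ)) (i j : ℕ) :
    Set.InjOn (shiftSet F i j) F := by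
  intro A hA B hB hAB
  rcases shiftSet_cases F i j A with ⟨_, hA'⟩ | ⟨⟨hiA, hjA, hmA⟩, hA'⟩ <;>
    rcases shiftSet_cases F i j B with ⟨_, hB'⟩ | ⟨⟨hiB, hjB, hmB⟩, hB'⟩
  · rw [hA', hB'] at hAB; exact hAB
  · -- A fixed, B moved : A = (insert j B).erase i ∈ F, contradiction
    rw [hA', hB'] at hAB
    exact absurd (hAB ▸ hA) hmB
  · rw [hA', hB'] at hAB
    exact absurd (hAB.symm ▸ hB) hmA
  · rw [hA', hB'] at hAB
    -- both moved: recover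
    have hij : i ≠ j := fun h => hjA (h ▸ hiA)
    have : insert i ((insert j A).erase i) = insert i ((insert j B).erase i) := by
      rw [hAB]
    rw [insert_erase (mem_insert_of_mem hiA), insert_erase (mem_insert_of_mem hiB)] at this
    -- now insert j A = insert j B with j ∉ A, j ∉ B
    have := congrArg (fun s => Finset.erase s j) this
    simpa [erase_insert hjA, erase_insert hjB] using this

lemma deg_shift_eq_filter (F : Finset (Finset ℕ)) (i j m : ℕ) :
    deg (F.image (shiftSet F i j)) m = (F.filter (fun A => m ∈ shiftSet F i j A)).card := by
  unfold deg
  rw [filter_image]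
  exact card_image_of_injOn ((shiftSet_injOn F i j).mono (filter_subset _ _))

lemma deg_shift_ge (F : Finset (Finset ℕ)) (i j m : ℕ) (hm : m ≠ i) :
    deg F m ≤ deg (F.image (shiftSet F i j)) m := by
  rw [deg_shift_eq_filter]
  apply card_le_card
  intro A hA
  rw [mem_filter] at hA ⊢
  exact ⟨hA.1, mem_shifted_of_ne hm hA.2⟩

lemma shift_intersecting (hint : IntersectingFam F) :
    IntersectingFam (F.image (shiftSet F i j)) := by
  intro X hX Y hY
  obtain ⟨A, hA, rfl⟩ := mem_image.1 hX
  obtain ⟨B, hB, rfl⟩ := mem_image.1 hY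
  -- helper to handle the mixed case
  have mixed : ∀ A B : Finset ℕ, A ∈ F → B ∈ F →
      (i ∈ A ∧ j ∉ A ∧ (insert j A).erase i ∉ F) →
      ¬ (i ∈ B ∧ j ∉ B ∧ (insert j B).erase i ∉ F) →
      (((insert j A).erase i) ∩ B).Nonempty := by
    intro A B hA hB hcA hcB
    obtain ⟨hiA, hjA, hmA⟩ := hcA
    by_cases hx : ∃ x ∈ A ∩ B, x ≠ i
    · obtain ⟨x, hxAB, hxi⟩ := hx
      rw [mem_inter] at hxAB
      exact ⟨x, mem_inter.2 ⟨mem_erase.2 ⟨hxi, mem_insert_of_mem hxAB.1⟩, hxAB.2⟩⟩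
    · push_neg at hx
      have hiB : i ∈ B := by
        obtain ⟨x, hxAB⟩ := hint A hA B hB
        have := hx x hxAB
        subst this
        exact (mem_inter.1 hxAB).2
      by_cases hjB : j ∈ B
      · refine ⟨j, mem_inter.2 ⟨?_, hjB⟩⟩
        exact mem_erase.2 ⟨fun h => hjA (h ▸ hiA), mem_insert_self _ _⟩
      · have hBmoved : (insert j B).erase i ∈ F := by
          by_contra hc
          exact hcB ⟨hiB, hjB, hc⟩
        obtain ⟨x, hxm⟩ := hint A hA _ hBmoved
        rw [mem_inter, mem_erase, mem_insert] at hxm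
        obtain ⟨hxA, hxi, hxB⟩ := hxm
        rcases hxB with rfl | hxB
        · exact absurd hxA hjA
        · have := hx x (mem_inter.2 ⟨hxA, hxB⟩)
          exact absurd this hxi
  rcases shiftSet_cases F i j A with ⟨hcA, hA'⟩ | ⟨hcA, hA'⟩ <;>
    rcases shiftSet_cases F i j B with ⟨hcB, hB'⟩ | ⟨hcB, hB'⟩
  · rw [hA', hB']; exact hint A hA B hB
  · rw [hA', hB', inter_comm]
    exact mixed B A hB hA hcB hcA
  · rw [hA', hB']
    exact mixed A B hA hB hcA hcB
  · rw [hA', hB']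
    refine ⟨j, mem_inter.2 ⟨?_, ?_⟩⟩ <;>
      exact mem_erase.2 ⟨fun h => hcA.2.1 (h ▸ hcA.1), mem_insert_self _ _⟩


/-- measure of a family relative to B' -/
def msr (B' : Finset ℕ) (F : Finset (Finset ℕ)) : ℕ := ∑ A ∈ F, (A \ B').card

lemma msr_shift_lt {F : Finset (Finset ℕ)} {B' : Finset ℕ} {i j : ℕ}
    (hi : i ∉ B') (hj : j ∈ B')
    (hex : ∃ A₀ ∈ F, i ∈ A₀ ∧ j ∉ A₀ ∧ (insert j A₀).erase i ∉ F) :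
    msr B' (F.image (shiftSet F i j)) < msr B' F := by
  obtain ⟨A₀, hA₀, hiA₀, hjA₀, hmA₀⟩ := hex
  unfold msr
  rw [sum_image (fun x hx y hy h => shiftSet_injOn F i j hx hy h)]
  have key : ∀ A : Finset ℕ, ((shiftSet F i j A) \ B').card ≤ (A \ B').card ∧
      ((i ∈ A ∧ j ∉ A ∧ (insert j A).erase i ∉ F) → ((shiftSet F i j A) \ B').card < (A \ B').card) := by
    intro A
    rcases shiftSet_cases F i j A with ⟨hc, h⟩ | ⟨hc, h⟩
    · rw [h]; exact ⟨le_refl _, fun hcc => absurd hcc hc⟩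
    · rw [h]
      have hsub : ((insert j A).erase i) \ B' ⊆ (A \ B').erase i := by
        intro x hx
        rw [mem_sdiff, mem_erase, mem_insert] at hx
        obtain ⟨⟨hxi, hxj⟩, hxB⟩ := hx
        rcases hxj with rfl | hxA
        · exact absurd hj hxB
        · exact mem_erase.2 ⟨hxi, mem_sdiff.2 ⟨hxA, hxB⟩⟩
      have hlt : ((A \ B').erase i).card < (A \ B').card := by
        apply card_erase_lt_of_mem
        exact mem_sdiff.2 ⟨hc.1, hi⟩
      exact ⟨le_of_lt (lt_of_le_of_lt (card_le_card hsub) hlt),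
        fun _ => lt_of_le_of_lt (card_le_card hsub) hlt⟩
  apply sum_lt_sum (fun A _ => (key A).1)
  exact ⟨A₀, hA₀, (key A₀).2 ⟨hiA₀, hjA₀, hmA₀⟩⟩

/-- Existence of a fully shifted (towards B') family. -/
lemma exists_shifted (n k : ℕ) (B' : Finset ℕ) (hB' : B' ⊆ Icc 1 n) :
    ∀ (N : ℕ) (F : Finset (Finset ℕ)), msr B' F ≤ N →
    (∀ A ∈ F, A ⊆ Icc 1 n) → (∀ A ∈ F, A.card = k) → IntersectingFam F →
    ∃ G : Finset (Finset ℕ),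
      (∀ A ∈ G, A ⊆ Icc 1 n) ∧ (∀ A ∈ G, A.card = k) ∧ IntersectingFam G ∧
      (∀ b ∈ B', deg F b ≤ deg G b) ∧
      (∀ A ∈ G, ∀ i ∈ A, i ∉ B' → ∀ j ∈ B', j ∉ A → (insert j A).erase i ∈ G) := by
  intro N
  induction N with
  | zero =>
    intro F hμ hsub hcard hint
    refine ⟨F, hsub, hcard, hint, fun b _ => le_refl _, ?_⟩
    intro A hA i hiA hiB j hjB hjA
    exfalso
    have h1 : 1 ≤ (A \ B').card := card_pos.2 ⟨i, mem_sdiff.2 ⟨hiA, hiB⟩⟩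
    have h2 : (A \ B').card ≤ msr B' F :=
      single_le_sum (f := fun A => (A \ B').card) (fun _ _ => Nat.zero_le _) hA
    omega
  | succ N ih =>
    intro F hμ hsub hcard hint
    by_cases hex : ∃ A₀ ∈ F, ∃ i, i ∈ A₀ ∧ i ∉ B' ∧ ∃ j ∈ B', j ∉ A₀ ∧ (insert j A₀).erase i ∉ F
    · obtain ⟨A₀, hA₀, i, hiA₀, hiB, j, hjB, hjA₀, hm⟩ := hex
      set G₁ := F.image (shiftSet F i j) with hG₁
      have hμ' : msr B' G₁ ≤ N := by
        have h := msr_shift_lt (F := F) hiB hjB ⟨A₀, hA₀, hiA₀, hjA₀, hm⟩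
        rw [← hG₁] at h
        omega
      have hsub' : ∀ A ∈ G₁, A ⊆ Icc 1 n := by
        intro A hA
        obtain ⟨A', hA', rfl⟩ := mem_image.1 hA
        exact shiftSet_subset (hsub A' hA') (hB' hjB)
      have hcard' : ∀ A ∈ G₁, A.card = k := by
        intro A hA
        obtain ⟨A', hA', rfl⟩ := mem_image.1 hA
        rw [card_shiftSet]; exact hcard A' hA'
      obtain ⟨G, g1, g2, g3, g4, g5⟩ := ih G₁ hμ' hsub' hcard' (shift_intersecting hint)
      refine ⟨G, g1, g2, g3, ?_, g5⟩
      intro b hb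
      have hbi : b ≠ i := fun h => hiB (h ▸ hb)
      exact le_trans (deg_shift_ge F i j b hbi) (g4 b hb)
    · push_neg at hex
      refine ⟨F, hsub, hcard, hint, fun b _ => le_refl _, ?_⟩
      intro A hA i hiA hiB j hjB hjA
      exact hex A hA i hiA hiB j hjB hjA


/-- If G is closed under shifts into B', any member can be pushed fully into B'
    onto any k-set containing its trace. -/
lemma up_move {G : Finset (Finset ℕ)} {B' : Finset ℕ} {k : ℕ}
    (hcard : ∀ A ∈ G, A.card = k)
    (hcl : ∀ A ∈ G, ∀ i ∈ A, i ∉ B' → ∀ j ∈ B', j ∉ A → (insert j A).erase i ∈ G) :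
    ∀ (d : ℕ) (A : Finset ℕ), A ∈ G → (A \ B').card ≤ d →
      ∀ S : Finset ℕ, A ∩ B' ⊆ S → S ⊆ B' → S.card = k → S ∈ G := by
  intro d
  induction d with
  | zero =>
    intro A hA hd S hTS hSB hScard
    have hAB : A \ B' = ∅ := card_eq_zero.1 (Nat.le_zero.1 hd)
    have hAsub : A ⊆ B' := by
      intro x hx
      by_contra hxB
      exact absurd (mem_sdiff.2 ⟨hx, hxB⟩) (by simp [hAB])
    have : A ∩ B' = A := inter_eq_left.2 hAsub
    rw [this] at hTS
    have : A = S := eq_of_subset_of_card_le hTS (by rw [hScard, hcard A hA])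
    rwa [← this]
  | succ d ih =>
    intro A hA hd S hTS hSB hScard
    by_cases hAB : (A \ B').card = 0
    · exact ih A hA (by omega) S hTS hSB hScard
    · obtain ⟨i, hi⟩ := card_pos.1 (Nat.pos_of_ne_zero hAB)
      rw [mem_sdiff] at hi
      -- trace is strictly smaller than S
      have hcap : (A ∩ B').card < k := by
        have h1 : (A ∩ B').card + (A \ B').card = A.card := by
          rw [card_inter_add_card_sdiff]
        have := hcard A hA
        omega
      have hTSs : A ∩ B' ⊂ S := by
        refine ssubset_of_subset_of_ne hTS (fun h => ?_)
        rw [h, hScard] at hcap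
        omega
      obtain ⟨j, hjS, hjT⟩ := exists_of_ssubset hTSs
      have hjB : j ∈ B' := hSB hjS
      have hjA : j ∉ A := fun h => hjT (mem_inter.2 ⟨h, hjB⟩)
      have hA1 : (insert j A).erase i ∈ G := hcl A hA i hi.1 hi.2 j hjB hjA
      have hij : i ≠ j := fun h => hjA (h ▸ hi.1)
      -- new set's sdiff card decreased
      have hsd : ((insert j A).erase i) \ B' = (A \ B').erase i := by
        ext x
        simp only [mem_sdiff, mem_erase, mem_insert]
        constructor
        · rintro ⟨⟨hxi, rfl | hxA⟩, hxB⟩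
          · exact absurd hjB hxB
          · exact ⟨hxi, hxA, hxB⟩
        · rintro ⟨hxi, hxA, hxB⟩
          exact ⟨⟨hxi, Or.inr hxA⟩, hxB⟩
      have hd1 : (((insert j A).erase i) \ B').card ≤ d := by
        rw [hsd, card_erase_of_mem (mem_sdiff.2 hi)]
        omega
      have htr : ((insert j A).erase i) ∩ B' ⊆ S := by
        intro x hx
        rw [mem_inter, mem_erase, mem_insert] at hx
        obtain ⟨⟨hxi, hxx⟩, hxB⟩ := hx
        rcases hxx with rfl | hxA
        · exact hjS
        · exact hTS (mem_inter.2 ⟨hxA, hxB⟩)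
      exact ih _ hA1 hd1 S htr hSB hScard


variable {m : ℕ}

def ftop (m : ℕ) (hm : 0 < m) : Fin m := ⟨m - 1, by omega⟩

lemma le_ftop (hm : 0 < m) (x : Fin m) : x ≤ ftop m hm := by
  rw [Fin.le_def]
  have := x.isLt
  simp only [ftop]
  omega

/-- L1: everything of the right size avoiding top is ≤ D in colex, if top ∈ D -/
lemma subset_initSeg (hm : 0 < m) (D : Finset (Fin m)) (hD : ftop m hm ∈ D) :
    powersetCard D.card ((univ : Finset (Fin m)).erase (ftop m hm)) ∪ {D} ⊆ initSeg D := by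
  intro t ht
  rcases mem_union.1 ht with ht | ht
  · rw [mem_powersetCard] at ht
    obtain ⟨hsub, hcard⟩ := ht
    have htop : ftop m hm ∉ t := fun h => (mem_erase.1 (hsub h)).1 rfl
    have hne : t ≠ D := fun h => htop (h ▸ hD)
    rw [mem_initSeg]
    refine ⟨hcard.symm, le_of_lt ?_⟩
    rw [toColex_lt_toColex_iff_max'_mem]
    refine ⟨hne, ?_⟩
    have hmem : ftop m hm ∈ t ∆ D := by
      rw [mem_symmDiff]; right; exact ⟨hD, htop⟩
    have : (t ∆ D).max' (symmDiff_nonempty.2 hne) = ftop m hm :=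
      le_antisymm (max'_le _ _ _ (fun y _ => le_ftop hm y)) (le_max' _ _ hmem)
    rw [this]; exact hD
  · rw [mem_singleton] at ht
    subst ht
    exact mem_initSeg_self

/-- L2: cardinality lower bound for initSeg of a set containing top -/
lemma initSeg_card_ge (hm : 0 < m) (D : Finset (Fin m)) (hD : ftop m hm ∈ D) :
    (m - 1).choose D.card + 1 ≤ #(initSeg D) := by
  have h := card_le_card (subset_initSeg hm D hD)
  have hdisj : Disjoint (powersetCard D.card ((univ : Finset (Fin m)).erase (ftop m hm))) {D} := by
    rw [disjoint_singleton_right, mem_powersetCard]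
    rintro ⟨hsub, -⟩
    exact (mem_erase.1 (hsub hD)).1 rfl
  rw [card_union_of_disjoint hdisj, card_singleton, card_powersetCard, card_erase_of_mem
    (mem_univ _), Finset.card_fin] at h
  exact h

/-- the interval-like set D used for the initial segment -/
def intervD (m : ℕ) (hm : 0 < m) (r : ℕ) (hr : r ≤ m - 1) : Finset (Fin m) :=
  insert (ftop m hm) (attachFin (range r) (fun x hx => by rw [mem_range] at hx; omega))

lemma ftop_not_mem_base (hm : 0 < m) (r : ℕ) (hr : r ≤ m - 1) :
    ftop m hm ∉ (attachFin (range r) (fun x hx => by rw [mem_range] at hx; omega) :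
      Finset (Fin m)) := by
  rw [mem_attachFin, mem_range]
  simp only [ftop]
  omega

lemma card_intervD (hm : 0 < m) (r : ℕ) (hr : r ≤ m - 1) :
    (intervD m hm r hr).card = r + 1 := by
  rw [intervD, card_insert_of_notMem (ftop_not_mem_base hm r hr), card_attachFin, card_range]

lemma mem_intervD_ftop (hm : 0 < m) (r : ℕ) (hr : r ≤ m - 1) :
    ftop m hm ∈ intervD m hm r hr := mem_insert_self _ _

/-- L3: exact description of initSeg (intervD) -/
lemma initSeg_intervD (hm : 0 < m) (r : ℕ) (hr : r ≤ m - 1) :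
    initSeg (intervD m hm r hr) =
      powersetCard (r + 1) ((univ : Finset (Fin m)).erase (ftop m hm)) ∪ {intervD m hm r hr} := by
  set top := ftop m hm
  set D := intervD m hm r hr with hDdef
  refine Finset.Subset.antisymm ?_ ?_
  · intro t ht
    rw [mem_initSeg] at ht
    obtain ⟨hcard, hle⟩ := ht
    rw [card_intervD hm r hr] at hcard
    by_cases htop : top ∈ t
    · -- show t = D
      refine mem_union.2 (Or.inr ?_)
      rw [mem_singleton]
      by_contra hne
      have hlt : toColex t < toColex D := lt_of_le_of_ne hle (by rwa [ne_eq, toColex_inj])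
      rw [toColex_lt_toColex_iff_max'_mem] at hlt
      obtain ⟨hne', hw⟩ := hlt
      set w := (t ∆ D).max' (symmDiff_nonempty.2 hne') with hwdef
      have hwt : w ∉ t := by
        have hwmem : w ∈ t ∆ D := max'_mem _ _
        rw [mem_symmDiff] at hwmem
        rcases hwmem with ⟨hwt, hwD⟩ | ⟨_, hwt⟩
        · exact absurd hw hwD
        · exact hwt
      have hwtop : w ≠ top := fun h => hwt (h ▸ htop)
      have hwbase : w.val < r := by
        rw [hDdef, intervD, mem_insert] at hw
        rcases hw with h | h
        · exact absurd h hwtop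
        · rwa [mem_attachFin, mem_range] at h
      -- t \ D nonempty
      have htD : (t \ D).Nonempty := by
        rw [sdiff_nonempty]
        intro hsub
        exact hne (eq_of_subset_of_card_le hsub (by rw [← hcard, card_intervD hm r hr]))
      obtain ⟨x, hx⟩ := htD
      rw [mem_sdiff] at hx
      have hxw : x ≤ w := le_max' _ _ (by rw [mem_symmDiff]; left; exact ⟨hx.1, hx.2⟩)
      have : x ∈ D := by
        rw [hDdef, intervD, mem_insert]
        right
        rw [mem_attachFin, mem_range]
        have := Fin.le_def.1 hxw
        omega
      exact hx.2 this
    · refine mem_union.2 (Or.inl ?_)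
      rw [mem_powersetCard]
      exact ⟨fun x hx => mem_erase.2 ⟨fun h => htop (h ▸ hx), mem_univ _⟩, hcard.symm⟩
  · have := subset_initSeg hm D (mem_intervD_ftop hm r hr)
    rwa [card_intervD hm r hr] at this


lemma card_initSeg_intervD (hm : 0 < m) (r : ℕ) (hr : r ≤ m - 1) :
    #(initSeg (intervD m hm r hr)) = (m - 1).choose (r + 1) + 1 := by
  rw [initSeg_intervD hm r hr, card_union_of_disjoint, card_singleton, card_powersetCard,
    card_erase_of_mem (mem_univ _), Finset.card_fin]
  rw [disjoint_singleton_right, mem_powersetCard]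
  rintro ⟨hsub, -⟩
  exact (mem_erase.1 (hsub (mem_intervD_ftop hm r hr))).1 rfl

/-- L4: iterated shadows of initial segments -/
lemma iter_shadow_initSeg (hm : 0 < m) :
    ∀ (i : ℕ) (D : Finset (Fin m)), ftop m hm ∈ D → i < D.card →
    ∃ E : Finset (Fin m), ftop m hm ∈ E ∧ E.card = D.card - i ∧
      ∂^[i] (initSeg D) = initSeg E := by
  intro i
  induction i with
  | zero => intro D hD _; exact ⟨D, hD, by simp, rfl⟩
  | succ i ih =>
    intro D hD hiD
    have hne : D.Nonempty := ⟨_, hD⟩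
    have h2 : 2 ≤ D.card := by omega
    have hmin : D.min' hne ≠ ftop m hm := by
      obtain ⟨x, hx, hxne⟩ := exists_mem_ne (s := D) (by omega) (ftop m hm)
      intro h
      have h1 : D.min' hne ≤ x := min'_le _ _ hx
      have h2 : x ≤ ftop m hm := le_ftop hm x
      rw [h] at h1
      exact hxne (le_antisymm h2 h1)
    have htopE : ftop m hm ∈ D.erase (D.min' hne) :=
      mem_erase.2 ⟨fun h => hmin h.symm, hD⟩
    have hcardE : (D.erase (D.min' hne)).card = D.card - 1 :=
      card_erase_of_mem (min'_mem _ _)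
    obtain ⟨E, hE1, hE2, hE3⟩ := ih (D.erase (D.min' hne)) htopE (by omega)
    refine ⟨E, hE1, ?_, ?_⟩
    · omega
    · rw [Function.iterate_succ_apply, Colex.shadow_initSeg hne, hE3]

/-- L5: strict Kruskal-Katona-type bound -/
lemma KKcore (hm : 0 < m) (r i : ℕ) (hr : r ≤ m - 1) (hi : i ≤ r)
    (𝒢 : Finset (Finset (Fin m))) (hG : ∀ X ∈ 𝒢, X.card = r + 1)
    (hcard : (m - 1).choose (r + 1) + 1 ≤ #𝒢) :
    (m - 1).choose (r + 1 - i) + 1 ≤ #(∂^[i] 𝒢) := by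
  have h1 : #(initSeg (intervD m hm r hr)) ≤ #𝒢 := by
    rw [card_initSeg_intervD hm r hr]; exact hcard
  have h2 : #(∂^[i] (initSeg (intervD m hm r hr))) ≤ #(∂^[i] 𝒢) := by
    apply iterated_kk (r := r + 1)
    · intro X hX; exact hG X hX
    · exact h1
    · have := isInitSeg_initSeg (s := intervD m hm r hr)
      rwa [card_intervD hm r hr] at this
  obtain ⟨E, hE1, hE2, hE3⟩ := iter_shadow_initSeg hm i (intervD m hm r hr)
    (mem_intervD_ftop hm r hr) (by rw [card_intervD hm r hr]; omega)
  rw [hE3] at h2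
  have h3 := initSeg_card_ge hm E hE1
  rw [hE2, card_intervD hm r hr] at h3
  omega

/-- The downward transfer lemma (Lemma B): in `Fin (2k)`, a family `H` of `(s-1)`-sets whose
upward closure at level `k-1` is small must itself be small. -/
lemma LemmaB (k s : ℕ) (hk : 2 ≤ k) (hs2 : 2 ≤ s) (hsk : s ≤ k)
    (H 𝒰 : Finset (Finset (Fin (2 * k))))
    (hH : ∀ T ∈ H, T.card = s - 1)
    (h𝒰 : ∀ X : Finset (Fin (2 * k)), X.card = k - 1 → (∃ T ∈ H, T ⊆ X) → X ∈ 𝒰)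
    (h𝒰card : #𝒰 ≤ (2 * k - 1).choose (k - 2)) :
    H.card ≤ (2 * k - 1).choose (s - 2) := by
  by_contra hcon
  push_neg at hcon
  set 𝒢 := H.image compl with h𝒢
  have hGcard : #𝒢 = #H := card_image_of_injective _ compl_injective
  have hGsized : ∀ X ∈ 𝒢, X.card = (2 * k - s) + 1 := by
    intro X hX
    obtain ⟨T, hT, rfl⟩ := mem_image.1 hX
    rw [card_compl, Fintype.card_fin, hH T hT]
    omega
  have hchoose : (2 * k - 1).choose (s - 2) = (2 * k - 1).choose ((2 * k - s) + 1) := by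
    rw [← Nat.choose_symm (by omega)]
    congr 1
    omega
  have hstep : (2 * k - 1).choose ((2 * k - s) + 1) + 1 ≤ #𝒢 := by
    rw [hGcard, ← hchoose]; omega
  have hKK := KKcore (by omega : 0 < 2 * k) (2 * k - s) (k - s) (by omega) (by omega) 𝒢
    hGsized hstep
  have harith : (2 * k - s) + 1 - (k - s) = k + 1 := by omega
  rw [harith] at hKK
  -- now map the iterated shadow into 𝒰 via complements
  have hmap : (∂^[k - s] 𝒢).image compl ⊆ 𝒰 := by
    intro Y hY
    obtain ⟨X, hX, rfl⟩ := mem_image.1 hY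
    rw [mem_shadow_iterate_iff_exists_sdiff] at hX
    obtain ⟨G, hG, hXG, hGX⟩ := hX
    obtain ⟨T, hT, rfl⟩ := mem_image.1 (h𝒢 ▸ hG)
    have hXcard : X.card = k + 1 := by
      have h1 : Tᶜ.card = 2 * k - s + 1 := hGsized _ hG
      have h2 : (Tᶜ \ X).card = Tᶜ.card - X.card := card_sdiff_of_subset hXG
      have h3 : X.card ≤ Tᶜ.card := card_le_card hXG
      omega
    refine h𝒰 Xᶜ ?_ ⟨T, hT, ?_⟩
    · rw [card_compl, Fintype.card_fin, hXcard]; omega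
    · intro x hx
      rw [mem_compl]
      intro hxX
      exact absurd (hXG hxX) (by rw [mem_compl]; simp [hx])
  have hfinal : #(∂^[k - s] 𝒢) ≤ #𝒰 :=
    le_trans (le_of_eq (Finset.card_image_of_injective _ compl_injective).symm)
      (card_le_card hmap)
  have hsymm : (2 * k - 1).choose (k + 1) = (2 * k - 1).choose (k - 2) := by
    rw [← Nat.choose_symm (by omega : k + 1 ≤ 2 * k - 1)]
    congr 1
    omega
  omega


/-- Apply the HZ hypothesis on an arbitrary ground set of size 2k+1. -/
lemma HZ_on_ground
    (HZ : ∀ n k : ℕ, ∀ F : Finset (Finset ℕ), 2 * k < n →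
      (∀ A ∈ F, A ⊆ Icc 1 n) → (∀ A ∈ F, A.card = k) → IntersectingFam F →
      ∃ i ∈ Icc 1 n, deg F i ≤ Nat.choose (n - 2) (k - 2))
    (k : ℕ) (B' : Finset ℕ) (hB : B'.card = 2 * k + 1)
    (𝒮 : Finset (Finset ℕ)) (h1 : ∀ S ∈ 𝒮, S ⊆ B') (h2 : ∀ S ∈ 𝒮, S.card = k)
    (h3 : IntersectingFam 𝒮) :
    ∃ j₀ ∈ B', ((𝒮.filter (fun S => j₀ ∈ S)).card ≤ (2 * k - 1).choose (k - 2)) := by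
  classical
  set e := B'.orderIsoOfFin hB with he
  set f : ℕ → ℕ := fun x => if h : x ∈ B' then (e.symm ⟨x, h⟩ : Fin (2 * k + 1)).val + 1 else 0
    with hf
  have hfmem : ∀ x ∈ B', f x ∈ Icc 1 (2 * k + 1) := by
    intro x hx
    rw [hf]
    simp only [dif_pos hx]
    have := (e.symm ⟨x, hx⟩).isLt
    rw [mem_Icc]
    omega
  have hfinj : ∀ x ∈ B', ∀ y ∈ B', f x = f y → x = y := by
    intro x hx y hy hxy
    rw [hf] at hxy
    simp only [dif_pos hx, dif_pos hy, add_left_inj] at hxy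
    have h2 := e.symm.injective (Fin.val_injective hxy)
    exact Subtype.ext_iff.1 h2
  set 𝒮' := 𝒮.image (fun S => S.image f) with h𝒮'
  have hg1 : ∀ S ∈ 𝒮', S ⊆ Icc 1 (2 * k + 1) := by
    intro S hS
    obtain ⟨T, hT, rfl⟩ := mem_image.1 hS
    intro x hx
    obtain ⟨y, hy, rfl⟩ := mem_image.1 hx
    exact hfmem y (h1 T hT hy)
  have hg2 : ∀ S ∈ 𝒮', S.card = k := by
    intro S hS
    obtain ⟨T, hT, rfl⟩ := mem_image.1 hS
    rw [card_image_of_injOn (fun x hx y hy => hfinj x (h1 T hT hx) y (h1 T hT hy))]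
    exact h2 T hT
  have hg3 : IntersectingFam 𝒮' := by
    intro S hS T hT
    obtain ⟨S₀, hS₀, rfl⟩ := mem_image.1 hS
    obtain ⟨T₀, hT₀, rfl⟩ := mem_image.1 hT
    obtain ⟨x, hx⟩ := h3 S₀ hS₀ T₀ hT₀
    rw [mem_inter] at hx
    exact ⟨f x, mem_inter.2 ⟨mem_image_of_mem f hx.1, mem_image_of_mem f hx.2⟩⟩
  obtain ⟨w, hw, hwdeg⟩ := HZ (2 * k + 1) k 𝒮' (by omega) hg1 hg2 hg3
  rw [mem_Icc] at hw
  set a : Fin (2 * k + 1) := ⟨w - 1, by omega⟩ with ha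
  set j₀ : ℕ := (e a : ℕ) with hj₀
  have hj₀B : j₀ ∈ B' := (e a).2
  have hfj₀ : f j₀ = w := by
    rw [hf]
    simp only [dif_pos hj₀B]
    have : e.symm ⟨j₀, hj₀B⟩ = a := by
      apply e.symm_apply_eq.2
      rfl
    rw [this, ha]
    simp
    omega
  refine ⟨j₀, hj₀B, ?_⟩
  have hdegle : (𝒮.filter (fun S => j₀ ∈ S)).card ≤ deg 𝒮' w := by
    unfold deg
    apply card_le_card_of_injOn (fun S => S.image f)
    · intro S hS
      rw [mem_coe, mem_filter] at hS ⊢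
      refine ⟨mem_image_of_mem _ hS.1, ?_⟩
      rw [← hfj₀]
      exact mem_image_of_mem f hS.2
    · intro S hS T hT hST
      dsimp only at hST
      have hST : S.image f = T.image f := hST
      rw [coe_filter, Set.mem_setOf_eq] at hS hT
      apply Finset.ext
      intro x
      constructor
      · intro hx
        have : f x ∈ T.image f := hST ▸ mem_image_of_mem f hx
        obtain ⟨y, hy, hxy⟩ := mem_image.1 this
        rwa [← hfinj y (h1 T hT.1 hy) x (h1 S hS.1 hx) hxy]
      · intro hx
        have : f x ∈ S.image f := hST ▸ mem_image_of_mem f hx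
        obtain ⟨y, hy, hxy⟩ := mem_image.1 this
        rwa [← hfinj y (h1 S hS.1 hy) x (h1 T hT.1 hx) hxy]
  have : (2 * k + 1 - 2) = 2 * k - 1 := by omega
  rw [this] at hwdeg
  exact le_trans hdegle hwdeg


/-- The key lemma: any (2k+1)-subset of the ground contains a low-degree vertex. -/
lemma key
    (HZ : ∀ n k : ℕ, ∀ F : Finset (Finset ℕ), 2 * k < n →
      (∀ A ∈ F, A ⊆ Icc 1 n) → (∀ A ∈ F, A.card = k) → IntersectingFam F →
      ∃ i ∈ Icc 1 n, deg F i ≤ Nat.choose (n - 2) (k - 2))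
    (n k : ℕ) (hk : 2 ≤ k) (hn : 2 * k + 1 ≤ n)
    (F : Finset (Finset ℕ)) (hF : ∀ A ∈ F, A ⊆ Icc 1 n)
    (hunif : ∀ A ∈ F, A.card = k) (hint : IntersectingFam F)
    (B' : Finset ℕ) (hB'sub : B' ⊆ Icc 1 n) (hB'card : B'.card = 2 * k + 1) :
    ∃ j₀ ∈ B', deg F j₀ ≤ (n - 2).choose (k - 2) := by
  classical
  obtain ⟨G, hGsub, hGcard, hGint, hGdeg, hGcl⟩ :=
    exists_shifted n k B' hB'sub (msr B' F) F le_rfl hF hunif hint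
  -- the family of members fully inside B'
  set 𝒮 := G.filter (fun S => S ⊆ B') with h𝒮
  have h𝒮sub : ∀ S ∈ 𝒮, S ⊆ B' := fun S hS => (mem_filter.1 hS).2
  have h𝒮card : ∀ S ∈ 𝒮, S.card = k := fun S hS => hGcard S (mem_filter.1 hS).1
  have h𝒮int : IntersectingFam 𝒮 := fun A hA B hB =>
    hGint A (mem_filter.1 hA).1 B (mem_filter.1 hB).1
  obtain ⟨j₀, hj₀B, hj₀deg⟩ := HZ_on_ground HZ k B' hB'card 𝒮 h𝒮sub h𝒮card h𝒮int
  refine ⟨j₀, hj₀B, ?_⟩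
  have hdegFG : deg F j₀ ≤ deg G j₀ := hGdeg j₀ hj₀B
  -- now bound deg G j₀
  -- upward closure fact: any k-subset of B' containing a trace of a member is in 𝒮
  have hup : ∀ A ∈ G, ∀ S : Finset ℕ, A ∩ B' ⊆ S → S ⊆ B' → S.card = k → S ∈ 𝒮 := by
    intro A hA S h1 h2 h3
    exact mem_filter.2 ⟨up_move hGcard hGcl ((A \ B').card) A hA le_rfl S h1 h2 h3, h2⟩
  -- ground set for the Fin world
  set gr := B'.erase j₀ with hgr
  have hgrcard : gr.card = 2 * k := by
    rw [hgr, card_erase_of_mem hj₀B, hB'card]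
    omega
  set eIso := gr.orderIsoOfFin hgrcard with heIso
  set ψ : Fin (2 * k) → ℕ := fun a => (eIso a : ℕ) with hψ
  set fn : ℕ → Fin (2 * k) := fun x => if h : x ∈ gr then eIso.symm ⟨x, h⟩ else
    (⟨0, by omega⟩ : Fin (2 * k)) with hfn
  have hψmem : ∀ a, ψ a ∈ gr := fun a => (eIso a).2
  have hψinj : Function.Injective ψ := fun a b hab =>
    eIso.injective (Subtype.ext hab)
  have hfnψ : ∀ a, fn (ψ a) = a := by
    intro a
    rw [hfn]
    simp only [dif_pos (hψmem a)]
    apply eIso.symm_apply_eq.2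
    rfl
  have hψfn : ∀ x ∈ gr, ψ (fn x) = x := by
    intro x hx
    rw [hfn]
    simp only [dif_pos hx]
    rw [hψ]
    simp
  -- the filter of 𝒮 at j₀
  set 𝒮j := 𝒮.filter (fun S => j₀ ∈ S) with h𝒮j
  -- level-s trace families
  set Fj := G.filter (fun A => j₀ ∈ A) with hFj
  have hdeg_eq : deg G j₀ = Fj.card := rfl
  set T' : ℕ → Finset (Finset ℕ) :=
    fun s => (Fj.filter (fun A => (A ∩ B').card = s)).image (fun A => A ∩ B') with hT'
  -- membership facts about traces
  have htrace : ∀ s, ∀ T ∈ T' s, j₀ ∈ T ∧ T ⊆ B' ∧ T.card = s ∧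
      ∃ A ∈ G, A ∩ B' = T := by
    intro s T hT
    obtain ⟨A, hA, rfl⟩ := mem_image.1 hT
    rw [mem_filter] at hA
    obtain ⟨hA1, hA2⟩ := hA
    rw [hFj, mem_filter] at hA1
    exact ⟨mem_inter.2 ⟨hA1.2, hj₀B⟩, inter_subset_right, hA2, A, hA1.1, rfl⟩
  -- no traces of size 1
  have hT1 : ∀ A ∈ Fj, (A ∩ B').card ≠ 1 := by
    intro A hA hcon
    rw [hFj, mem_filter] at hA
    have hj₀T : j₀ ∈ A ∩ B' := mem_inter.2 ⟨hA.2, hj₀B⟩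
    have hTsing : A ∩ B' = {j₀} := by
      rw [card_eq_one] at hcon
      obtain ⟨x, hx⟩ := hcon
      rw [hx] at hj₀T
      rw [mem_singleton] at hj₀T
      rw [hx, hj₀T]
    -- then every k-subset of B' through j₀ lies in 𝒮j: too many
    have hbig : ∀ X ∈ powersetCard (k-1) gr, insert j₀ X ∈ 𝒮j := by
      intro X hX
      rw [mem_powersetCard] at hX
      have hj₀X : j₀ ∉ X := fun h => (mem_erase.1 (hX.1 h)).1 rfl
      have : insert j₀ X ∈ 𝒮 := by
        apply hup A hA.1 (insert j₀ X)
        · rw [hTsing]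
          intro y hy
          rw [mem_singleton] at hy
          rw [hy]
          exact mem_insert_self _ _
        · intro y hy
          rcases mem_insert.1 hy with rfl | hy
          · exact hj₀B
          · exact mem_of_mem_erase (hX.1 hy)
        · rw [card_insert_of_notMem hj₀X, hX.2]
          omega
      exact mem_filter.2 ⟨this, mem_insert_self _ _⟩
    have hinj : (powersetCard (k-1) gr).card ≤ 𝒮j.card := by
      apply card_le_card_of_injOn (fun X => insert j₀ X) hbig
      intro X hX Y hY hXY
      simp only [mem_coe, mem_powersetCard] at hX hY
      have hj₀X : j₀ ∉ X := fun h => (mem_erase.1 (hX.1 h)).1 rfl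
      have hj₀Y : j₀ ∉ Y := fun h => (mem_erase.1 (hY.1 h)).1 rfl
      have := congrArg (fun s => Finset.erase s j₀) hXY
      simpa [erase_insert hj₀X, erase_insert hj₀Y] using this
    rw [card_powersetCard, hgrcard] at hinj
    -- (2k choose k-1) ≤ (2k-1 choose k-2) : contradiction
    have hpas : (2*k).choose (k-1) = (2*k-1).choose (k-2) + (2*k-1).choose (k-1) := by
      have h3 := Nat.choose_succ_succ (2*k-1) (k-2)
      simp only [Nat.succ_eq_add_one] at h3
      have h1 : 2*k-1+1 = 2*k := by omega
      have h2 : (k-2)+1 = k-1 := by omega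
      rw [h1, h2] at h3
      exact h3
    have hpos : 0 < (2*k-1).choose (k-1) := Nat.choose_pos (by omega)
    have := le_trans hinj hj₀deg
    omega
  -- trace count bound for levels 2..k
  have hTs : ∀ s, 2 ≤ s → s ≤ k → (T' s).card ≤ (2*k-1).choose (s-2) := by
    intro s hs2 hsk
    -- map to Fin (2k) world
    set H : Finset (Finset (Fin (2*k))) :=
      ((T' s).image (fun T => T.erase j₀)).image (fun T => T.image fn) with hH
    set 𝒰 : Finset (Finset (Fin (2*k))) :=
      (𝒮j.image (fun S => S.erase j₀)).image (fun T => T.image fn) with h𝒰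
    -- injectivity on subsets of gr
    have hfninjOn : ∀ T ⊆ gr, ∀ U ⊆ gr, T.image fn = U.image fn → T = U := by
      intro T hT U hU h
      apply Finset.ext
      intro x
      constructor
      · intro hx
        have h1 : fn x ∈ U.image fn := h ▸ mem_image_of_mem fn hx
        obtain ⟨y, hy, hxy⟩ := mem_image.1 h1
        have h2 : ψ (fn y) = ψ (fn x) := congrArg ψ hxy
        rw [hψfn y (hU hy), hψfn x (hT hx)] at h2
        rwa [← h2]
      · intro hx
        have h1 : fn x ∈ T.image fn := h.symm ▸ mem_image_of_mem fn hx
        obtain ⟨y, hy, hxy⟩ := mem_image.1 h1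
        have h2 : ψ (fn y) = ψ (fn x) := congrArg ψ hxy
        rw [hψfn y (hT hy), hψfn x (hU hx)] at h2
        rwa [← h2]
    -- erased traces are subsets of gr
    have herase_sub : ∀ T ∈ T' s, T.erase j₀ ⊆ gr := by
      intro T hT x hx
      rw [mem_erase] at hx
      exact mem_erase.2 ⟨hx.1, (htrace s T hT).2.1 hx.2⟩
    have h𝒮erase_sub : ∀ S ∈ 𝒮j, S.erase j₀ ⊆ gr := by
      intro S hS x hx
      rw [h𝒮j, mem_filter] at hS
      rw [mem_erase] at hx
      exact mem_erase.2 ⟨hx.1, h𝒮sub S hS.1 hx.2⟩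
    -- cardinality of H equals that of T' s
    have e1 : #((T' s).image (fun T => T.erase j₀)) = #(T' s) := by
      apply card_image_of_injOn
      intro T hT U hU hTU
      simp only [mem_coe] at hT hU
      have hjT := (htrace s T hT).1
      have hjU := (htrace s U hU).1
      have := congrArg (insert j₀) hTU
      rwa [insert_erase hjT, insert_erase hjU] at this
    have e2 : #H = #((T' s).image (fun T => T.erase j₀)) := by
      rw [hH]
      apply card_image_of_injOn
      intro T hT U hU hTU
      simp only [mem_coe, Finset.mem_image] at hT hU
      obtain ⟨T₀, hT₀, rfl⟩ := hT
      obtain ⟨U₀, hU₀, rfl⟩ := hU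
      exact hfninjOn _ (herase_sub T₀ hT₀) _ (herase_sub U₀ hU₀) hTU
    -- sizes in H
    have hHsized : ∀ Tf ∈ H, Tf.card = s - 1 := by
      intro Tf hTf
      rw [hH] at hTf
      obtain ⟨T₁, hT₁, rfl⟩ := mem_image.1 hTf
      obtain ⟨T, hT, rfl⟩ := mem_image.1 hT₁
      have hsub := herase_sub T hT
      have hinj2 : Set.InjOn fn (T.erase j₀) := by
        intro x hx y hy hxy
        rw [mem_coe] at hx hy
        have h2 : ψ (fn x) = ψ (fn y) := congrArg ψ hxy
        rwa [hψfn x (hsub hx), hψfn y (hsub hy)] at h2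
      show ((T.erase j₀).image fn).card = s - 1
      calc ((T.erase j₀).image fn).card = (T.erase j₀).card := card_image_of_injOn hinj2
        _ = T.card - 1 := card_erase_of_mem (htrace s T hT).1
        _ = s - 1 := by rw [(htrace s T hT).2.2.1]
    -- upward closure property
    have h𝒰prop : ∀ X : Finset (Fin (2*k)), X.card = k - 1 → (∃ Tf ∈ H, Tf ⊆ X) → X ∈ 𝒰 := by
      intro X hXcard hEx
      obtain ⟨Tf, hTf, hTfX⟩ := hEx
      rw [hH] at hTf
      obtain ⟨T₁, hT₁, rfl⟩ := mem_image.1 hTf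
      obtain ⟨T, hT, rfl⟩ := mem_image.1 hT₁
      obtain ⟨hjT, hTB, hTcard, A, hAG, hAT⟩ := htrace s T hT
      set ψX := X.image ψ with hψX
      have hψXsub : ψX ⊆ gr := by
        intro x hx
        obtain ⟨a, _, rfl⟩ := mem_image.1 hx
        exact hψmem a
      have hj₀ψX : j₀ ∉ ψX := fun h => (mem_erase.1 (hψXsub h)).1 rfl
      set S := insert j₀ ψX with hS
      have hScard : S.card = k := by
        rw [hS, card_insert_of_notMem hj₀ψX, hψX,
          card_image_of_injective _ hψinj, hXcard]
        omega
      have hSB : S ⊆ B' := by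
        intro x hx
        rcases mem_insert.1 hx with rfl | hx
        · exact hj₀B
        · exact mem_of_mem_erase (hψXsub hx)
      have hTS : A ∩ B' ⊆ S := by
        rw [hAT]
        intro x hx
        by_cases hxj : x = j₀
        · rw [hxj]; exact mem_insert_self _ _
        · have hxe : x ∈ T.erase j₀ := mem_erase.2 ⟨hxj, hx⟩
          have : fn x ∈ (T.erase j₀).image fn := mem_image_of_mem fn hxe
          have hmem : fn x ∈ X := hTfX this
          have : ψ (fn x) ∈ ψX := mem_image_of_mem ψ hmem
          rw [hψfn x (herase_sub T hT hxe)] at this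
          exact mem_insert_of_mem this
      have hS𝒮 : S ∈ 𝒮 := hup A hAG S hTS hSB hScard
      have hS𝒮j : S ∈ 𝒮j := by
        rw [h𝒮j, mem_filter]
        exact ⟨hS𝒮, mem_insert_self _ _⟩
      -- X is the fn-image of S.erase j₀
      have hSerase : S.erase j₀ = ψX := by
        rw [hS, erase_insert hj₀ψX]
      have hXeq : X = (S.erase j₀).image fn := by
        rw [hSerase, hψX, image_image]
        have : (fn ∘ ψ) = id := funext hfnψ
        rw [this, image_id]
      rw [h𝒰]
      rw [hXeq]
      exact mem_image_of_mem _ (mem_image_of_mem _ hS𝒮j)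
    have h𝒰card : #𝒰 ≤ (2*k-1).choose (k-2) := by
      rw [h𝒰]
      exact le_trans (card_image_le.trans card_image_le) hj₀deg
    have := LemmaB k s hk hs2 hsk H 𝒰 hHsized h𝒰prop h𝒰card
    rw [e2, e1] at this
    exact this
  -- final counting
  refine le_trans hdegFG ?_
  rw [hdeg_eq]
  set N := n - (2*k+1) with hN
  have hfib : Fj.card = ∑ s ∈ Icc 1 k, (Fj.filter (fun A => (A ∩ B').card = s)).card := by
    apply card_eq_sum_card_fiberwise
    intro A hA
    rw [mem_coe, mem_Icc]
    rw [mem_coe, hFj, mem_filter] at hA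
    constructor
    · have hmem : j₀ ∈ A ∩ B' := mem_inter.2 ⟨hA.2, hj₀B⟩
      exact card_pos.2 ⟨j₀, hmem⟩
    · exact le_trans (card_le_card inter_subset_left) (le_of_eq (hGcard A hA.1))
  have hfiber_bound : ∀ s,
      (Fj.filter (fun A => (A ∩ B').card = s)).card ≤ (T' s).card * N.choose (k - s) := by
    intro s
    set Fs := Fj.filter (fun A => (A ∩ B').card = s) with hFs
    have h1 : Fs.card = ∑ T ∈ T' s, (Fs.filter (fun A => A ∩ B' = T)).card := by
      apply card_eq_sum_card_fiberwise
      intro A hA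
      exact mem_image_of_mem _ hA
    rw [h1]
    have h2 : ∀ T ∈ T' s, (Fs.filter (fun A => A ∩ B' = T)).card ≤ N.choose (k - s) := by
      intro T hT
      have hle : (Fs.filter (fun A => A ∩ B' = T)).card ≤
          (powersetCard (k - s) ((Icc 1 n) \ B')).card := by
        apply card_le_card_of_injOn (fun A => A \ B')
        · intro A hA
          rw [mem_coe, mem_filter] at hA
          obtain ⟨hA1, hA2⟩ := hA
          rw [hFs, mem_filter] at hA1
          obtain ⟨hA0, hAs⟩ := hA1
          rw [hFj, mem_filter] at hA0
          simp only [mem_coe, mem_powersetCard]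
          constructor
          · intro x hx
            rw [mem_sdiff] at hx ⊢
            exact ⟨hGsub A hA0.1 hx.1, hx.2⟩
          · have hh1 := card_inter_add_card_sdiff A B'
            have hh2 := hGcard A hA0.1
            omega
        · intro A hA A2 hA2 hAA
          simp only [mem_coe, mem_filter] at hA hA2
          have hrec : ∀ C : Finset ℕ, (C ∩ B') ∪ (C \ B') = C := by
            intro C
            ext x
            simp only [mem_union, mem_inter, mem_sdiff]
            tauto
          have hAA' : A \ B' = A2 \ B' := hAA
          have hcomb : (A ∩ B') ∪ (A \ B') = (A2 ∩ B') ∪ (A2 \ B') := by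
            rw [hA.2, hA2.2, hAA']
          rwa [hrec, hrec] at hcomb
      rw [card_powersetCard, card_sdiff_of_subset hB'sub, Nat.card_Icc, hB'card] at hle
      have harith : n + 1 - 1 - (2*k+1) = N := by omega
      rwa [harith] at hle
    calc ∑ T ∈ T' s, (Fs.filter (fun A => A ∩ B' = T)).card
        ≤ ∑ _T ∈ T' s, N.choose (k-s) := sum_le_sum h2
      _ = (T' s).card * N.choose (k-s) := by rw [sum_const, smul_eq_mul]
  have hsum : Fj.card ≤ ∑ s ∈ Icc 1 k, (T' s).card * N.choose (k - s) := by
    rw [hfib]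
    exact sum_le_sum (fun s _ => hfiber_bound s)
  have hT1' : (T' 1).card = 0 := by
    rw [card_eq_zero, hT']
    simp only [image_eq_empty]
    rw [filter_eq_empty_iff]
    intro A hA
    exact hT1 A hA
  have hsplit : ∑ s ∈ Icc 1 k, (T' s).card * N.choose (k-s)
      = ∑ s ∈ Icc 2 k, (T' s).card * N.choose (k-s) := by
    have hicc : Icc 1 k = insert 1 (Icc 2 k) := by
      ext x
      simp only [mem_Icc, mem_insert]
      omega
    rw [hicc, sum_insert (by simp [mem_Icc])]
    rw [hT1', zero_mul, zero_add]
  have hbound2 : ∑ s ∈ Icc 2 k, (T' s).card * N.choose (k-s)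
      ≤ ∑ s ∈ Icc 2 k, (2*k-1).choose (s-2) * N.choose (k-s) := by
    apply sum_le_sum
    intro s hs
    rw [mem_Icc] at hs
    exact Nat.mul_le_mul_right _ (hTs s hs.1 hs.2)
  have hvander : ∑ s ∈ Icc 2 k, (2*k-1).choose (s-2) * N.choose (k-s)
      = (2*k-1+N).choose (k-2) := by
    rw [Nat.add_choose_eq, Finset.Nat.sum_antidiagonal_eq_sum_range_succ_mk]
    apply Finset.sum_nbij' (i := fun s => s - 2) (j := fun j => j + 2)
    · intro s hs
      rw [mem_Icc] at hs
      rw [mem_range]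
      omega
    · intro j hj
      rw [mem_range] at hj
      rw [mem_Icc]
      omega
    · intro s hs
      rw [mem_Icc] at hs
      omega
    · intro j hj
      omega
    · intro s hs
      rw [mem_Icc] at hs
      have : k - s = k - 2 - (s - 2) := by omega
      rw [this]
  have hfin : (2*k-1+N) = n - 2 := by omega
  rw [hfin] at hvander
  omega


theorem final
    (HZ : ∀ n k : ℕ, ∀ F : Finset (Finset ℕ), 2 * k < n →
      (∀ A ∈ F, A ⊆ Icc 1 n) → (∀ A ∈ F, A.card = k) → IntersectingFam F →
      ∃ i ∈ Icc 1 n, deg F i ≤ Nat.choose (n - 2) (k - 2))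
    (n k : ℕ) (hn : 2 * k + 1 ≤ n)
    (F : Finset (Finset ℕ)) (hF : ∀ A ∈ F, A ⊆ Icc 1 n)
    (hunif : ∀ A ∈ F, A.card = k) (hint : IntersectingFam F) :
    n - 2 * k ≤
      ((Icc 1 n).filter (fun i => deg F i ≤ Nat.choose (n - 2) (k - 2))).card := by
  classical
  by_cases hk : k ≤ 1
  · -- degenerate: every degree is at most 1 = C(n-2, 0)
    have hC : Nat.choose (n - 2) (k - 2) = 1 := by
      have : k - 2 = 0 := by omega
      rw [this, Nat.choose_zero_right]
    have hdeg1 : ∀ i : ℕ, deg F i ≤ 1 := by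
      intro i
      unfold deg
      have hsub : F.filter (fun A => i ∈ A) ⊆ {({i} : Finset ℕ)} := by
        intro A hA
        rw [mem_filter] at hA
        rw [mem_singleton]
        apply Finset.eq_singleton_iff_unique_mem.2
        refine ⟨hA.2, ?_⟩
        intro x hx
        have hcard := hunif A hA.1
        have h1 : 0 < A.card := card_pos.2 ⟨i, hA.2⟩
        have h2 : A.card = 1 := by omega
        rw [card_eq_one] at h2
        obtain ⟨a, ha⟩ := h2
        have hia : i ∈ ({a} : Finset ℕ) := ha ▸ hA.2
        have hxa : x ∈ ({a} : Finset ℕ) := ha ▸ hx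
        rw [mem_singleton] at hia hxa
        rw [hxa, hia]
      calc (F.filter (fun A => i ∈ A)).card ≤ ({({i} : Finset ℕ)} : Finset (Finset ℕ)).card :=
          card_le_card hsub
        _ = 1 := card_singleton _
    have : (Icc 1 n).filter (fun i => deg F i ≤ Nat.choose (n - 2) (k - 2)) = Icc 1 n := by
      apply filter_true_of_mem
      intro i _
      rw [hC]
      exact hdeg1 i
    rw [this, Nat.card_Icc]
    omega
  · push_neg at hk
    set good := (Icc 1 n).filter (fun i => deg F i ≤ Nat.choose (n - 2) (k - 2)) with hgood
    set bad := (Icc 1 n).filter (fun i => ¬ (deg F i ≤ Nat.choose (n - 2) (k - 2))) with hbad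
    have hsum : good.card + bad.card = n := by
      rw [hgood, hbad, card_filter_add_card_filter_not, Nat.card_Icc]
      omega
    have hbadle : bad.card ≤ 2 * k := by
      by_contra hcon
      push_neg at hcon
      obtain ⟨B', hB'sub, hB'card⟩ := exists_subset_card_eq (by omega : 2*k+1 ≤ bad.card)
      have hB'Icc : B' ⊆ Icc 1 n := hB'sub.trans (filter_subset _ _)
      obtain ⟨j₀, hj₀B, hj₀deg⟩ := key HZ n k (by omega) hn F hF hunif hint B' hB'Icc hB'card
      have := hB'sub hj₀B
      rw [hbad, mem_filter] at this
      exact this.2 hj₀deg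
    omega


end Stmt8work

theorem stmt8
    (HZ : ∀ n k : ℕ, ∀ F : Finset (Finset ℕ), 2 * k < n →
      (∀ A ∈ F, A ⊆ Icc 1 n) → (∀ A ∈ F, A.card = k) → IntersectingFam F →
      ∃ i ∈ Icc 1 n, deg F i ≤ Nat.choose (n - 2) (k - 2))
    (n k : ℕ) (hn : 2 * k + 1 ≤ n)
    (F : Finset (Finset ℕ)) (hF : ∀ A ∈ F, A ⊆ Icc 1 n)
    (hunif : ∀ A ∈ F, A.card = k) (hint : IntersectingFam F) :
    n - 2 * k ≤
      ((Icc 1 n).filter (fun i => deg F i ≤ Nat.choose (n - 2) (k - 2))).card :=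
  Stmt8work.final HZ n k hn F hF hunif hint
end

section
/- Let \(a, b, t, n\) be positive integers with \(n > 3\max\{a,b\}\), and let \(\mathcal{A} \subseteq \binom{[n]}{a}\) and \(\mathcal{B} \subseteq \binom{[n]}{b}\) be nonempty t-cross-intersecting families. Then \(|\mathcal{A}| \le 2^b \binom{n-b}{a-t}\) and \(|\mathcal{B}| \le 2^a \binom{n-a}{b-t}\). -/
open Finset

lemma chooseMonoK {m : ℕ} : ∀ {k l : ℕ}, k ≤ l → 2 * l ≤ m → m.choose k ≤ m.choose l := by
  intro k l hkl hlm
  induction l with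
  | zero => simp [Nat.le_zero.mp hkl]
  | succ l ih =>
    rcases Nat.eq_or_lt_of_le hkl with h | h
    · exact h ▸ le_rfl
    · have hk : k ≤ l := Nat.lt_succ_iff.mp h
      exact (ih hk (by omega)).trans
        (Nat.choose_le_succ_of_lt_half_left (by omega))

lemma keyBound (n c t u : ℕ) (F : Finset (Finset ℕ)) (C : Finset ℕ)
    (hC : C ⊆ Icc 1 n) (hCc : C.card = c)
    (hF : ∀ A ∈ F, A ⊆ Icc 1 n) (hFc : ∀ A ∈ F, A.card = u)
    (hcr : ∀ A ∈ F, t ≤ (A ∩ C).card)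
    (hhalf : 2 * (u - t) ≤ n - c) :
    F.card ≤ 2 ^ c * Nat.choose (n - c) (u - t) := by
  have hcard : F.card = ∑ S ∈ C.powerset, (F.filter (fun A => A ∩ C = S)).card := by
    apply card_eq_sum_card_fiberwise
    intro A _
    simp [mem_powerset, inter_subset_right]
  rw [hcard]
  have hbnd : ∀ S ∈ C.powerset, (F.filter (fun A => A ∩ C = S)).card ≤
      Nat.choose (n - c) (u - t) := by
    intro S _
    rcases (F.filter (fun A => A ∩ C = S)).eq_empty_or_nonempty with he | ⟨A₀, hA₀⟩
    · simp [he]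
    · simp only [mem_filter] at hA₀
      have hts : t ≤ S.card := hA₀.2 ▸ hcr A₀ hA₀.1
      have hsu : S.card ≤ u := by
        rw [← hFc A₀ hA₀.1, ← hA₀.2]; exact card_le_card inter_subset_left
      have hstep : (F.filter (fun A => A ∩ C = S)).card ≤
          ((Icc 1 n \ C).powersetCard (u - S.card)).card := by
        apply card_le_card_of_injOn (fun A => A \ C)
        · intro A hA
          simp only [mem_coe, mem_filter] at hA ⊢
          rw [mem_powersetCard]
          constructor
          · exact sdiff_subset_sdiff (hF A hA.1) le_rfl
          · have h1 := Finset.card_inter_add_card_sdiff A C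
            have h2 := hFc A hA.1
            rw [hA.2] at h1
            omega
        · intro A hA A' hA' hEq
          simp only [coe_filter, Set.mem_setOf_eq] at hA hA'
          have hEq' : A \ C = A' \ C := hEq
          have : A \ C ∪ A ∩ C = A' \ C ∪ A' ∩ C := by rw [hA.2, hA'.2, hEq']
          rwa [Finset.sdiff_union_inter, Finset.sdiff_union_inter] at this
      have hnc : (Icc 1 n \ C).card = n - c := by
        rw [card_sdiff_of_subset hC, Nat.card_Icc, hCc]; omega
      calc (F.filter (fun A => A ∩ C = S)).card
          ≤ ((Icc 1 n \ C).powersetCard (u - S.card)).card := hstep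
        _ = Nat.choose (n - c) (u - S.card) := by rw [card_powersetCard, hnc]
        _ ≤ Nat.choose (n - c) (u - t) := chooseMonoK (by omega) hhalf
  calc ∑ S ∈ C.powerset, (F.filter (fun A => A ∩ C = S)).card
      ≤ ∑ _S ∈ C.powerset, Nat.choose (n - c) (u - t) := Finset.sum_le_sum hbnd
    _ = 2 ^ c * Nat.choose (n - c) (u - t) := by
        rw [Finset.sum_const, card_powerset, hCc, smul_eq_mul]

/-- Two families are t-cross-intersecting. -/
def TCrossIntersecting (t : ℕ) (F₁ F₂ : Finset (Finset ℕ)) : Prop :=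
  ∀ A ∈ F₁, ∀ B ∈ F₂, t ≤ (A ∩ B).card

theorem stmt9 (n a b t : ℕ) (ha : 0 < a) (hb : 0 < b) (ht : 0 < t) (hn0 : 0 < n)
    (hn : 3 * max a b < n)
    (𝒜 ℬ : Finset (Finset ℕ))
    (h𝒜 : ∀ A ∈ 𝒜, A ⊆ Icc 1 n) (h𝒜u : ∀ A ∈ 𝒜, A.card = a) (h𝒜ne : 𝒜.Nonempty)
    (hℬ : ∀ B ∈ ℬ, B ⊆ Icc 1 n) (hℬu : ∀ B ∈ ℬ, B.card = b) (hℬne : ℬ.Nonempty)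
    (hcross : TCrossIntersecting t 𝒜 ℬ) :
    𝒜.card ≤ 2 ^ b * Nat.choose (n - b) (a - t) ∧
    ℬ.card ≤ 2 ^ a * Nat.choose (n - a) (b - t) := by
  constructor
  · obtain ⟨B₀, hB₀⟩ := hℬne
    exact keyBound n b t a 𝒜 B₀ (hℬ B₀ hB₀) (hℬu B₀ hB₀) h𝒜 h𝒜u
      (fun A hA => hcross A hA B₀ hB₀) (by omega)
  · obtain ⟨A₀, hA₀⟩ := h𝒜ne
    apply keyBound n a t b ℬ A₀ (h𝒜 A₀ hA₀) (h𝒜u A₀ hA₀) hℬ hℬu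
      (fun B hB => by rw [inter_comm]; exact hcross A₀ hA₀ B hB) (by omega)
end

section
/- Let \(n, k, \ell\) be integers with \(4 \le \ell+1 \le n\) and \(k \le n\). Let \(\mathcal{F} \subseteq \binom{[n]}{k}\) be the family of all k-element sets A such that either \(1 \in A\) and \(A \cap \{2,\dots,\ell+1\} \neq \emptyset\), or \(\{2,\dots,\ell+1\} \subseteq A\). Then \(\mathcal{F}\) is intersecting, and for each \(i \in \{2,\dots,\ell+1\}\), the degree of i equals \(\binom{n-2}{k-2} + \binom{n-\ell-1}{k-\ell}\); in particular \(d_{\ell+1}(\mathcal{F}) = \binom{n-2}{k-2} + \binom{n-\ell-1}{k-\ell}\). -/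
open Finset

/-- Counting `k`-subsets of `t` containing a fixed subset `s`. -/
lemma count_contain (t s : Finset ℕ) (k : ℕ) (hs : s ⊆ t) (hk : s.card ≤ k) :
    (t.powerset.filter (fun A => A.card = k ∧ s ⊆ A)).card
      = (t.card - s.card).choose (k - s.card) := by
  rw [← Finset.card_sdiff_of_subset hs, ← Finset.card_powersetCard]
  apply Finset.card_bij' (fun A _ => A \ s) (fun B _ => B ∪ s)
  · intro A hA
    simp only [mem_filter, mem_powerset] at hA
    obtain ⟨hAt, hAk, hsA⟩ := hA
    rw [Finset.mem_powersetCard]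
    exact ⟨sdiff_subset_sdiff hAt (le_refl s), by rw [Finset.card_sdiff_of_subset hsA, hAk]⟩
  · intro B hB
    rw [Finset.mem_powersetCard] at hB
    obtain ⟨hBt, hBk⟩ := hB
    have hdisj : Disjoint B s := Finset.disjoint_left.2 fun x hx =>
      (Finset.mem_sdiff.1 (hBt hx)).2
    simp only [mem_filter, mem_powerset]
    refine ⟨Finset.union_subset (hBt.trans (Finset.sdiff_subset)) hs, ?_, subset_union_right⟩
    rw [Finset.card_union_of_disjoint hdisj, hBk, Nat.sub_add_cancel hk]
  · intro A hA
    simp only [mem_filter, mem_powerset] at hA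
    exact Finset.sdiff_union_of_subset hA.2.2
  · intro B hB
    rw [Finset.mem_powersetCard] at hB
    have hdisj : Disjoint B s := Finset.disjoint_left.2 fun x hx =>
      (Finset.mem_sdiff.1 (hB.1 hx)).2
    exact Finset.union_sdiff_cancel_right hdisj

theorem stmt16 (n k ℓ : ℕ) (hℓ : 4 ≤ ℓ + 1) (hℓn : ℓ + 1 ≤ n) (hℓk : ℓ ≤ k) (hk : k ≤ n)
    (F : Finset (Finset ℕ))
    (hF : F = (Icc 1 n).powerset.filter (fun A => A.card = k ∧
      ((1 ∈ A ∧ (A ∩ Icc 2 (ℓ + 1)).Nonempty) ∨ Icc 2 (ℓ + 1) ⊆ A))) :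
    IntersectingFam F ∧
    ∀ i ∈ Icc 2 (ℓ + 1),
      deg F i = Nat.choose (n - 2) (k - 2) + Nat.choose (n - ℓ - 1) (k - ℓ) := by
  have hℓ3 : 3 ≤ ℓ := by omega
  have h2mem : 2 ∈ Icc 2 (ℓ + 1) := by simp; omega
  constructor
  · intro A hA B hB
    rw [hF, mem_filter] at hA hB
    obtain ⟨-, -, hA2⟩ := hA
    obtain ⟨-, -, hB2⟩ := hB
    rcases hA2 with ⟨h1A, x, hx⟩ | hIA
    · rcases hB2 with ⟨h1B, -⟩ | hIB
      · exact ⟨1, Finset.mem_inter.2 ⟨h1A, h1B⟩⟩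
      · rw [Finset.mem_inter] at hx
        exact ⟨x, Finset.mem_inter.2 ⟨hx.1, hIB hx.2⟩⟩
    · rcases hB2 with ⟨-, x, hx⟩ | hIB
      · rw [Finset.mem_inter] at hx
        exact ⟨x, Finset.mem_inter.2 ⟨hIA hx.2, hx.1⟩⟩
      · exact ⟨2, Finset.mem_inter.2 ⟨hIA h2mem, hIB h2mem⟩⟩
  · intro i hi
    rw [Finset.mem_Icc] at hi
    have hi1 : i ≠ 1 := by omega
    have hiIcc : i ∈ Icc 2 (ℓ + 1) := Finset.mem_Icc.2 hi
    unfold deg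
    rw [hF, Finset.filter_filter]
    have hsplit :
        ((Icc 1 n).powerset.filter (fun A => (A.card = k ∧
            ((1 ∈ A ∧ (A ∩ Icc 2 (ℓ + 1)).Nonempty) ∨ Icc 2 (ℓ + 1) ⊆ A)) ∧ i ∈ A))
        = ((Icc 1 n).powerset.filter (fun A => A.card = k ∧ {1, i} ⊆ A))
          ∪ ((Icc 2 n).powerset.filter (fun A => A.card = k ∧ Icc 2 (ℓ + 1) ⊆ A)) := by
      ext A
      simp only [Finset.mem_union, mem_filter, mem_powerset]
      constructor
      · rintro ⟨hAt, ⟨hk', hcond⟩, hiA⟩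
        by_cases h1 : 1 ∈ A
        · left
          refine ⟨hAt, hk', ?_⟩
          intro x hx
          simp only [Finset.mem_insert, Finset.mem_singleton] at hx
          rcases hx with rfl | rfl
          · exact h1
          · exact hiA
        · right
          have hIcc : Icc 2 (ℓ + 1) ⊆ A := by
            rcases hcond with ⟨h1', -⟩ | h
            · exact absurd h1' h1
            · exact h
          refine ⟨?_, hk', hIcc⟩
          intro x hx
          have := hAt hx
          rw [Finset.mem_Icc] at this ⊢
          have : x ≠ 1 := by rintro rfl; exact h1 hx
          omega
      · rintro (⟨hAt, hk', hsub⟩ | ⟨hAt, hk', hsub⟩)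
        · have h1A : 1 ∈ A := hsub (by simp)
          have hiA : i ∈ A := hsub (by simp)
          exact ⟨hAt, ⟨hk', Or.inl ⟨h1A, ⟨i, Finset.mem_inter.2 ⟨hiA, hiIcc⟩⟩⟩⟩, hiA⟩
        · refine ⟨?_, ⟨hk', Or.inr hsub⟩, hsub hiIcc⟩
          intro x hx
          have := hAt hx
          rw [Finset.mem_Icc] at this ⊢
          omega
    rw [hsplit, Finset.card_union_of_disjoint]
    · have c1 : ((Icc 1 n).powerset.filter (fun A => A.card = k ∧ {1, i} ⊆ A)).card
          = (n - 2).choose (k - 2) := by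
        have hsub : ({1, i} : Finset ℕ) ⊆ Icc 1 n := by
          intro x hx
          simp only [Finset.mem_insert, Finset.mem_singleton] at hx
          rcases hx with rfl | rfl <;> (rw [Finset.mem_Icc]; omega)
        have hcard : ({1, i} : Finset ℕ).card = 2 := by
          rw [Finset.card_insert_of_notMem (by simp [Ne.symm hi1]), Finset.card_singleton]
        rw [count_contain _ _ _ hsub (by omega), hcard, Nat.card_Icc]
        norm_num
      have c2 : ((Icc 2 n).powerset.filter (fun A => A.card = k ∧ Icc 2 (ℓ + 1) ⊆ A)).card
          = (n - ℓ - 1).choose (k - ℓ) := by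
        have hsub : Icc 2 (ℓ + 1) ⊆ Icc 2 n := Finset.Icc_subset_Icc (le_refl 2) hℓn
        have hcard : (Icc 2 (ℓ + 1)).card = ℓ := by rw [Nat.card_Icc]; omega
        rw [count_contain _ _ _ hsub (by omega), hcard, Nat.card_Icc]
        congr 1
        omega
      rw [c1, c2]
    · rw [Finset.disjoint_left]
      intro A hA hA'
      simp only [mem_filter, mem_powerset] at hA hA'
      have h1A : 1 ∈ A := hA.2.2 (by simp)
      have := hA'.1 h1A
      rw [Finset.mem_Icc] at this
      omega
end
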